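/- arXiv:1006.1567 — 11 statements merged into one kernel-verified Lean document; each statement's English description precedes it below -/
import Mathlib

section
/- For every integer n ≥ 1, ∫₀¹ u^(2n-1) · arccos(u) du = π·(2n)! / (n · 2^(2n+2) · (n!)²). -/
open Real

lemma cos_pow_even_integral (n : ℕ) :
    ∫ x in (0:ℝ)..(π/2), Real.cos x ^ (2 * n) =
      π / 2 * (Nat.factorial (2 * n)) / (4 ^ n * ((Nat.factorial n : ℝ)) ^ 2) := by
  induction n with
  | zero => simp
  | succ m ih =>
    have h : 2 * (m + 1) = 2 * m + 2 := by ring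
    rw [h, integral_cos_pow, ih]
    rw [Real.cos_pi_div_two, Real.sin_zero]
    have h1 : (Nat.factorial (2 * m) : ℝ) ≠ 0 := by positivity
    have h2 : (Nat.factorial m : ℝ) ≠ 0 := by positivity
    have hf1 : (Nat.factorial (2 * m + 2) : ℝ) =
        (2 * m + 2) * ((2 * m + 1) * Nat.factorial (2 * m)) := by
      rw [show 2 * m + 2 = (2 * m + 1) + 1 by ring, Nat.factorial_succ]
      push_cast [Nat.factorial_succ]
      ring
    have hf2 : (Nat.factorial (m + 1) : ℝ) = (m + 1) * Nat.factorial m := by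
      rw [Nat.factorial_succ]; push_cast; ring
    rw [hf1, hf2]
    have hzp : (0:ℝ) ^ (2 * m + 1) = 0 := zero_pow (by omega)
    rw [hzp]
    field_simp
    push_cast
    ring

theorem integral_pow_mul_arccos (n : ℕ) (hn : 1 ≤ n) :
    ∫ u in (0:ℝ)..1, u ^ (2 * n - 1) * Real.arccos u =
      Real.pi * (Nat.factorial (2 * n)) /
        (n * 2 ^ (2 * n + 2) * ((Nat.factorial n : ℝ)) ^ 2) := by
  obtain ⟨m, rfl⟩ : ∃ m, n = m + 1 := ⟨n - 1, by omega⟩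
  have hexp : 2 * (m + 1) - 1 = 2 * m + 1 := by omega
  rw [hexp]
  have hgc : Continuous fun u : ℝ => u ^ (2 * m + 1) * Real.arccos u :=
    (continuous_pow _).mul Real.continuous_arccos
  -- substitution u = cos x
  have hsub : ∫ x in (0:ℝ)..(π/2),
        (-Real.sin x) • ((fun u : ℝ => u ^ (2 * m + 1) * Real.arccos u) ∘ Real.cos) x
      = ∫ u in (1:ℝ)..0, u ^ (2 * m + 1) * Real.arccos u := by
    rw [intervalIntegral.integral_comp_smul_deriv
      (f := Real.cos) (f' := fun x => -Real.sin x)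
      (fun x _ => Real.hasDerivAt_cos x)
      (by fun_prop) hgc]
    norm_num
  have hkey : ∫ u in (0:ℝ)..1, u ^ (2 * m + 1) * Real.arccos u
      = ∫ x in (0:ℝ)..(π/2), x * (Real.cos x ^ (2 * m + 1) * Real.sin x) := by
    rw [intervalIntegral.integral_symm, ← hsub, ← intervalIntegral.integral_neg]
    apply intervalIntegral.integral_congr
    intro x hx
    rw [Set.uIcc_of_le (by positivity : (0:ℝ) ≤ π/2)] at hx
    have h0 : 0 ≤ x := hx.1
    have h1 : x ≤ π := le_trans hx.2 (by linarith [Real.pi_pos])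
    simp only [Function.comp_apply, smul_eq_mul]
    rw [Real.arccos_cos h0 h1]
    ring
  rw [hkey]
  -- integration by parts
  have hparts : ∫ x in (0:ℝ)..(π/2), x * (Real.cos x ^ (2 * m + 1) * Real.sin x)
      = (1 / (2 * (m:ℝ) + 2)) * ∫ x in (0:ℝ)..(π/2), Real.cos x ^ (2 * (m + 1)) := by
    have hv : ∀ x ∈ Set.uIcc (0:ℝ) (π/2),
        HasDerivAt (fun y => -(Real.cos y ^ (2 * m + 2)) / (2 * (m:ℝ) + 2))
          (Real.cos x ^ (2 * m + 1) * Real.sin x) x := by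
      intro x _
      have h1 : HasDerivAt (fun y => Real.cos y ^ (2 * m + 2))
          ((2 * m + 2 : ℕ) * Real.cos x ^ (2 * m + 1) * (-Real.sin x)) x :=
        (Real.hasDerivAt_cos x).pow (2 * m + 2)
      have h2 := (h1.neg.div_const (2 * (m:ℝ) + 2))
      convert h2 using 1
      case e'_4 => rfl
      case e'_5 => rfl
      case e'_8 => rfl
      have : (2 * (m:ℝ) + 2) ≠ 0 := by positivity
      push_cast
      rw [eq_div_iff this]
      ring
    have heq := intervalIntegral.integral_mul_deriv_eq_deriv_mul
      (u := fun x => x) (u' := fun _ => (1:ℝ))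
      (v := fun y => -(Real.cos y ^ (2 * m + 2)) / (2 * (m:ℝ) + 2))
      (v' := fun x => Real.cos x ^ (2 * m + 1) * Real.sin x)
      (a := 0) (b := π/2)
      (fun x _ => hasDerivAt_id x) hv
      (by apply Continuous.intervalIntegrable; fun_prop)
      (by apply Continuous.intervalIntegrable; fun_prop)
    rw [heq]
    simp only [Real.cos_pi_div_two, Real.cos_zero,
      zero_pow (show 2 * m + 2 ≠ 0 by omega), one_mul, zero_mul, neg_zero, zero_div,
      mul_zero, sub_zero, zero_sub]
    rw [show 2 * (m + 1) = 2 * m + 2 by ring]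
    rw [intervalIntegral.integral_div, intervalIntegral.integral_neg]
    ring
  rw [hparts, cos_pow_even_integral]
  have h1 : (Nat.factorial (2 * (m+1)) : ℝ) ≠ 0 := by positivity
  have h2 : (Nat.factorial (m+1) : ℝ) ≠ 0 := by positivity
  have hpow : (2:ℝ) ^ (2 * (m + 1) + 2) = 4 * 4 ^ (m + 1) := by
    rw [show 2 * (m + 1) + 2 = 2 * (m + 2) by ring, pow_mul]
    norm_num
    ring
  push_cast [hpow]
  have h3 : (4:ℝ) ^ (m+1) ≠ 0 := by positivity
  field_simp
  ring
end

section
/- Let g(x) = arccos(x) - x·√(1-x²) for x ∈ [0,1]. Then ∫₀¹ g(u)·√(1-u²) du = π²/16. -/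
theorem integral_g_mul_sqrt
    (g : ℝ → ℝ) (hg : ∀ x, g x = Real.arccos x - x * Real.sqrt (1 - x ^ 2)) :
    ∫ u in (0:ℝ)..1, g u * Real.sqrt (1 - u ^ 2) = Real.pi ^ 2 / 16 := by
  have hcontg : Continuous fun x : ℝ => Real.arccos x - x * Real.sqrt (1 - x ^ 2) :=
    Real.continuous_arccos.sub (continuous_id.mul
      ((continuous_const.sub (continuous_pow 2)).sqrt))
  set F : ℝ → ℝ := fun x => -(Real.arccos x - x * Real.sqrt (1 - x ^ 2)) ^ 2 / 4 with hF
  have hFcont : Continuous F := by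
    exact ((hcontg.pow 2).neg).div_const 4
  have hderiv : ∀ u ∈ Set.Ioo (0:ℝ) 1,
      HasDerivAt F (g u * Real.sqrt (1 - u ^ 2)) u := by
    intro u hu
    have h1 : (0:ℝ) < 1 - u ^ 2 := by nlinarith [hu.1, hu.2]
    have hs : 0 < Real.sqrt (1 - u ^ 2) := Real.sqrt_pos.2 h1
    have hs2 : Real.sqrt (1 - u ^ 2) ^ 2 = 1 - u ^ 2 := Real.sq_sqrt h1.le
    have harc : HasDerivAt Real.arccos (-(1 / Real.sqrt (1 - u ^ 2))) u :=
      Real.hasDerivAt_arccos (by nlinarith [hu.1]) (by nlinarith [hu.2])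
    have hinner : HasDerivAt (fun x : ℝ => 1 - x ^ 2) (-(2 * u)) u := by
      simpa using ((hasDerivAt_pow 2 u).const_sub 1)
    have hsqrt : HasDerivAt (fun x : ℝ => Real.sqrt (1 - x ^ 2))
        (1 / (2 * Real.sqrt (1 - u ^ 2)) * -(2 * u)) u :=
      (Real.hasDerivAt_sqrt h1.ne').comp u hinner
    have hmul : HasDerivAt (fun x : ℝ => x * Real.sqrt (1 - x ^ 2))
        (1 * Real.sqrt (1 - u ^ 2) + u * (1 / (2 * Real.sqrt (1 - u ^ 2)) * -(2 * u))) u :=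
      (hasDerivAt_id u).mul hsqrt
    have hgd : HasDerivAt (fun x : ℝ => Real.arccos x - x * Real.sqrt (1 - x ^ 2))
        (-(1 / Real.sqrt (1 - u ^ 2)) -
          (1 * Real.sqrt (1 - u ^ 2) + u * (1 / (2 * Real.sqrt (1 - u ^ 2)) * -(2 * u)))) u :=
      harc.sub hmul
    have hFd := (((hgd.pow 2).neg).div_const 4)
    have hkey : -(1 / Real.sqrt (1 - u ^ 2)) -
        (1 * Real.sqrt (1 - u ^ 2) + u * (1 / (2 * Real.sqrt (1 - u ^ 2)) * -(2 * u))) =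
        -2 * Real.sqrt (1 - u ^ 2) := by
      field_simp
      nlinarith [hs2]
    rw [hkey] at hFd
    convert hFd using 1
    · rfl
    · rfl
    · rfl
    rw [hg]
    push_cast
    ring
  have hint : IntervalIntegrable (fun u => g u * Real.sqrt (1 - u ^ 2))
      MeasureTheory.volume 0 1 := by
    apply Continuous.intervalIntegrable
    have : Continuous g := by
      have : g = fun x => Real.arccos x - x * Real.sqrt (1 - x ^ 2) := funext hg
      rw [this]; exact hcontg
    exact this.mul ((continuous_const.sub (continuous_pow 2)).sqrt)
  have key := intervalIntegral.integral_eq_sub_of_hasDerivAt_of_le (by norm_num)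
    hFcont.continuousOn hderiv hint
  rw [key, hF]
  simp [Real.arccos_one, Real.arccos_zero]
  ring
end

section
/- Let g(x) = arccos(x) - x·√(1-x²). Then ∫₀¹ g(u)² du = 2π/3 - 64/45. -/
set_option maxHeartbeats 1000000

open Real

theorem integral_g_sq
    (g : ℝ → ℝ) (hg : ∀ x, g x = Real.arccos x - x * Real.sqrt (1 - x ^ 2)) :
    ∫ u in (0:ℝ)..1, (g u) ^ 2 = 2 * Real.pi / 3 - 64 / 45 := by
  set F : ℝ → ℝ := fun x =>
    x * Real.arccos x ^ 2 - 2 * Real.sqrt (1 - x ^ 2) * Real.arccos x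
      + (2/3) * Real.sqrt (1 - x ^ 2) ^ 3 * Real.arccos x - 4 * x / 3 + x ^ 3 / 9 - x ^ 5 / 5
    with hF
  have hsqc : Continuous fun x : ℝ => Real.sqrt (1 - x ^ 2) :=
    (continuous_const.sub (continuous_pow 2)).sqrt
  have hgc : Continuous (fun u : ℝ => (g u) ^ 2) := by
    have : (fun u : ℝ => (g u) ^ 2)
        = fun u : ℝ => (Real.arccos u - u * Real.sqrt (1 - u ^ 2)) ^ 2 := by
      funext u; rw [hg]
    rw [this]
    exact (Real.continuous_arccos.sub (continuous_id.mul hsqc)).pow 2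
  have hFc : Continuous F := by
    rw [hF]
    exact (((((continuous_id.mul (Real.continuous_arccos.pow 2)).sub
      ((continuous_const.mul hsqc).mul Real.continuous_arccos)).add
      ((continuous_const.mul (hsqc.pow 3)).mul Real.continuous_arccos)).sub
      ((continuous_const.mul continuous_id).div_const 3)).add
      ((continuous_pow 3).div_const 9)).sub ((continuous_pow 5).div_const 5)
  have key : ∫ u in (0:ℝ)..1, (g u) ^ 2 = F 1 - F 0 := by
    apply intervalIntegral.integral_eq_sub_of_hasDerivAt_of_le (by norm_num)
      hFc.continuousOn _ (hgc.intervalIntegrable 0 1)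
    intro x hx
    obtain ⟨hx0, hx1⟩ := hx
    have hs2 : (0:ℝ) < 1 - x ^ 2 := by nlinarith
    set s := Real.sqrt (1 - x ^ 2) with hsdef
    have hs : 0 < s := Real.sqrt_pos.mpr hs2
    have hsne : s ≠ 0 := hs.ne'
    have hss : s ^ 2 = 1 - x ^ 2 := Real.sq_sqrt hs2.le
    have hsd : HasDerivAt (fun x : ℝ => Real.sqrt (1 - x ^ 2)) (-x / s) x := by
      have h1 : HasDerivAt (fun x : ℝ => 1 - x ^ 2) (-(2 * x)) x := by
        simpa using ((hasDerivAt_pow 2 x).const_sub 1)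
      have := (Real.hasDerivAt_sqrt hs2.ne').comp x h1
      refine this.congr_deriv ?_
      field_simp
      ring
    have had : HasDerivAt Real.arccos (-(1 / s)) x :=
      Real.hasDerivAt_arccos (by linarith) (by linarith)
    have hD := ((((((hasDerivAt_id x).mul (had.pow 2)).sub
      ((hsd.const_mul 2).mul had)).add
      (((hsd.pow 3).const_mul (2/3)).mul had)).sub
      (((hasDerivAt_id x).const_mul 4).div_const 3)).add
      ((hasDerivAt_pow 3 x).div_const 9)).sub ((hasDerivAt_pow 5 x).div_const 5)
    rw [hF, hg]
    refine hD.congr_deriv ?_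
    simp only [Pi.pow_apply, id, ← hsdef]
    push_cast
    field_simp
    linear_combination (-18*s - 27*x^2*s) * hss
  rw [key, hF]
  simp only [Real.arccos_one, Real.arccos_zero]
  norm_num [Real.sqrt_one]
  ring
end

section
/- Let g(x) = arccos(x) - x·√(1-x²). Then ∫₀¹ g(u)² · √(1-u²) du = π³/48. -/
theorem integral_g_sq_mul_sqrt
    (g : ℝ → ℝ) (hg : ∀ x, g x = Real.arccos x - x * Real.sqrt (1 - x ^ 2)) :
    ∫ u in (0:ℝ)..1, (g u) ^ 2 * Real.sqrt (1 - u ^ 2) = Real.pi ^ 3 / 48 := by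
  have hgfun : (fun x => Real.arccos x - x * Real.sqrt (1 - x ^ 2)) = g := by
    funext y; rw [hg y]
  have hgc : Continuous g := by
    rw [← hgfun]
    exact Real.continuous_arccos.sub
      (continuous_id.mul ((continuous_const.sub (continuous_pow 2)).sqrt))
  have hint : Continuous fun u : ℝ => (g u) ^ 2 * Real.sqrt (1 - u ^ 2) :=
    (hgc.pow 2).mul ((continuous_const.sub (continuous_pow 2)).sqrt)
  have key : ∀ x ∈ Set.Ioo (0:ℝ) 1,
      HasDerivAt (fun x => -(g x) ^ 3 / 6) ((g x) ^ 2 * Real.sqrt (1 - x ^ 2)) x := by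
    intro x hx
    obtain ⟨hx0, hx1⟩ := hx
    have h1 : HasDerivAt Real.arccos (-(1 / Real.sqrt (1 - x ^ 2))) x :=
      Real.hasDerivAt_arccos (by linarith) (by linarith)
    have hs : (0:ℝ) < 1 - x ^ 2 := by nlinarith
    have h2 : HasDerivAt (fun x : ℝ => 1 - x ^ 2) (-(2 * x)) x := by
      simpa using ((hasDerivAt_pow 2 x).const_sub 1)
    have h3 : HasDerivAt (fun x : ℝ => Real.sqrt (1 - x ^ 2))
        (1 / (2 * Real.sqrt (1 - x ^ 2)) * -(2 * x)) x :=
      (Real.hasDerivAt_sqrt hs.ne').comp x h2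
    have h4 : HasDerivAt (fun x : ℝ => x * Real.sqrt (1 - x ^ 2))
        (1 * Real.sqrt (1 - x ^ 2) + x * (1 / (2 * Real.sqrt (1 - x ^ 2)) * -(2 * x))) x :=
      (hasDerivAt_id x).mul h3
    have hg' : HasDerivAt g (-2 * Real.sqrt (1 - x ^ 2)) x := by
      have h5 : HasDerivAt (fun x => Real.arccos x - x * Real.sqrt (1 - x ^ 2)) _ x := h1.sub h4
      rw [hgfun] at h5
      convert h5 using 1
      have hsq : Real.sqrt (1 - x ^ 2) ≠ 0 := (Real.sqrt_pos.2 hs).ne'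
      have hsqsq : Real.sqrt (1 - x ^ 2) * Real.sqrt (1 - x ^ 2) = 1 - x ^ 2 :=
        Real.mul_self_sqrt hs.le
      field_simp
      linear_combination (-1) * hsqsq
    have h6 : HasDerivAt (fun x => -(g x) ^ 3 / 6) _ x := ((hg'.pow 3).neg).div_const 6
    convert h6 using 1
    push_cast
    ring
  have hftc := intervalIntegral.integral_eq_sub_of_hasDerivAt_of_le zero_le_one
    (hgc.pow 3 |>.neg.div_const 6).continuousOn key (hint.intervalIntegrable 0 1)
  simp only [Pi.neg_apply, Pi.pow_apply] at hftc
  rw [hftc, hg 1, hg 0]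
  norm_num [Real.arccos_one, Real.arccos_zero]
  ring
end

section
/- Let g(x) = arccos(x) - x·√(1-x²) and G(x) = x·arccos(x) - √(1-x²) + (1/3)(1-x²)^(3/2) + 2/3. Then ∫₀¹ g(u)·G(√(1-u²)) du = π³/96 - 5π/48 + 4/9. -/
set_option maxHeartbeats 2000000

open Real

theorem integral_g_mul_G_sqrt
    (g : ℝ → ℝ) (hg : ∀ x, g x = Real.arccos x - x * Real.sqrt (1 - x ^ 2))
    (G : ℝ → ℝ) (hG : ∀ x, G x = x * Real.arccos x - Real.sqrt (1 - x ^ 2)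
        + (1 / 3) * (1 - x ^ 2) ^ ((3:ℝ) / 2) + 2 / 3) :
    ∫ u in (0:ℝ)..1, g u * G (Real.sqrt (1 - u ^ 2)) =
      Real.pi ^ 3 / 96 - 5 * Real.pi / 48 + 4 / 9 := by
  set F : ℝ → ℝ := fun u =>
    Real.arccos u ^ 3 / 6 - Real.pi / 8 * Real.arccos u ^ 2
      + Real.arccos u * Real.sqrt (1 - u ^ 2) * u * (Real.pi / 4 - Real.arccos u / 2)
      + Real.arccos u * (5 / 24 + 2 / 3 * u - 1 / 2 * u ^ 2 - 1 / 6 * u ^ 4)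
      + Real.pi / 8 * (u ^ 4 - u ^ 2)
      + Real.sqrt (1 - u ^ 2) *
          (-(4 / 9) + 5 / 24 * u - 2 / 9 * u ^ 2 + 11 / 36 * u ^ 3 - 1 / 18 * u ^ 5)
    with hFdef
  have hcont_sqrt : Continuous fun u : ℝ => Real.sqrt (1 - u ^ 2) :=
    Real.continuous_sqrt.comp (by continuity)
  have key : ∫ u in (0:ℝ)..1, g u * G (Real.sqrt (1 - u ^ 2)) = F 1 - F 0 := by
    apply intervalIntegral.integral_eq_sub_of_hasDerivAt_of_le (by norm_num : (0:ℝ) ≤ 1)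
    · apply Continuous.continuousOn
      rw [hFdef]
      continuity
    · intro x hx
      obtain ⟨hx0, hx1⟩ := hx
      have h1x : (0:ℝ) < 1 - x ^ 2 := by nlinarith
      have hS : 0 < Real.sqrt (1 - x ^ 2) := Real.sqrt_pos.2 h1x
      have hc := Real.hasDerivAt_arccos (by intro h; rw [h] at hx0; linarith) (ne_of_lt hx1)
      have hq : HasDerivAt (fun u : ℝ => 1 - u ^ 2) (-(2 * x)) x := by
        simpa using (hasDerivAt_pow 2 x).const_sub 1
      have hs : HasDerivAt (fun u : ℝ => Real.sqrt (1 - u ^ 2))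
          (-(2 * x) / (2 * Real.sqrt (1 - x ^ 2))) x := hq.sqrt (ne_of_gt h1x)
      have h1 := (hc.pow 3).div_const 6
      have h2 := (hc.pow 2).const_mul (Real.pi / 8)
      have h3 := ((hc.mul hs).mul (hasDerivAt_id x)).mul ((hc.div_const 2).const_sub (Real.pi / 4))
      have hP : HasDerivAt (fun u : ℝ => 5 / 24 + 2 / 3 * u - 1 / 2 * u ^ 2 - 1 / 6 * u ^ 4)
          (2 / 3 - 1 / 2 * (2 * x ^ 1) - 1 / 6 * (4 * x ^ 3)) x := by
        have := ((((hasDerivAt_id x).const_mul (2/3 : ℝ)).const_add (5/24 : ℝ)).sub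
          ((hasDerivAt_pow 2 x).const_mul (1/2 : ℝ))).sub ((hasDerivAt_pow 4 x).const_mul (1/6 : ℝ))
        refine HasDerivAt.congr_deriv this ?_
        push_cast
        ring
      have h4 := hc.mul hP
      have h5 := ((hasDerivAt_pow 4 x).sub (hasDerivAt_pow 2 x)).const_mul (Real.pi / 8)
      have hQ : HasDerivAt (fun u : ℝ =>
          -(4 / 9) + 5 / 24 * u - 2 / 9 * u ^ 2 + 11 / 36 * u ^ 3 - 1 / 18 * u ^ 5)
          (5 / 24 - 2 / 9 * (2 * x ^ 1) + 11 / 36 * (3 * x ^ 2) - 1 / 18 * (5 * x ^ 4)) x := by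
        have := (((((hasDerivAt_id x).const_mul (5/24 : ℝ)).const_add (-(4/9) : ℝ)).sub
          ((hasDerivAt_pow 2 x).const_mul (2/9 : ℝ))).add
          ((hasDerivAt_pow 3 x).const_mul (11/36 : ℝ))).sub
          ((hasDerivAt_pow 5 x).const_mul (1/18 : ℝ))
        refine HasDerivAt.congr_deriv this ?_
        push_cast
        ring
      have h6 := hs.mul hQ
      have H := (((((h1.sub h2).add h3).add h4).add h5).add h6)
      refine HasDerivAt.congr_deriv H ?_
      symm
      rw [hg, hG]
      have hs2 : Real.sqrt (1 - x ^ 2) ^ 2 = 1 - x ^ 2 := Real.sq_sqrt h1x.le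
      have hacs : Real.arccos (Real.sqrt (1 - x ^ 2)) = Real.pi / 2 - Real.arccos x := by
        rw [← Real.sin_arccos, ← Real.cos_pi_div_two_sub, Real.arccos_cos]
        · linarith [(Real.arccos_le_pi_div_two (x := x)).2 hx0.le]
        · have := Real.arccos_nonneg x
          have := Real.pi_pos
          linarith
      have hsx : Real.sqrt (1 - Real.sqrt (1 - x ^ 2) ^ 2) = x := by
        rw [hs2, show (1 : ℝ) - (1 - x ^ 2) = x ^ 2 by ring]
        exact Real.sqrt_sq hx0.le
      have hrp : (1 - Real.sqrt (1 - x ^ 2) ^ 2) ^ ((3:ℝ)/2) = x ^ 3 := by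
        rw [hs2, show (1 : ℝ) - (1 - x ^ 2) = x ^ 2 by ring,
          ← Real.rpow_natCast x 2, ← Real.rpow_mul hx0.le]
        norm_num
      rw [hacs, hsx, hrp]
      have hSne : Real.sqrt (1 - x ^ 2) ≠ 0 := ne_of_gt hS
      have hS3 : Real.sqrt (1 - x ^ 2) ^ 3 = (1 - x ^ 2) * Real.sqrt (1 - x ^ 2) := by
        rw [pow_succ, hs2]
      have hS4 : Real.sqrt (1 - x ^ 2) ^ 4 = (1 - x ^ 2) ^ 2 := by
        rw [show 4 = 2 * 2 from rfl, pow_mul, hs2]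
      have hS5 : Real.sqrt (1 - x ^ 2) ^ 5 = (1 - x ^ 2) ^ 2 * Real.sqrt (1 - x ^ 2) := by
        rw [pow_succ, hS4]
      have hS6 : Real.sqrt (1 - x ^ 2) ^ 6 = (1 - x ^ 2) ^ 3 := by
        rw [show 6 = 2 * 3 from rfl, pow_mul, hs2]
      have hS7 : Real.sqrt (1 - x ^ 2) ^ 7 = (1 - x ^ 2) ^ 3 * Real.sqrt (1 - x ^ 2) := by
        rw [pow_succ, hS6]
      have hS8 : Real.sqrt (1 - x ^ 2) ^ 8 = (1 - x ^ 2) ^ 4 := by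
        rw [show 8 = 2 * 4 from rfl, pow_mul, hs2]
      simp only [id, Pi.mul_apply]
      field_simp
      ring_nf
      simp only [hS8, hS7, hS6, hS5, hS4, hS3, hs2]
      ring
    · apply Continuous.intervalIntegrable
      have hfun : (fun u => g u * G (Real.sqrt (1 - u ^ 2))) = fun u =>
          (Real.arccos u - u * Real.sqrt (1 - u ^ 2)) *
            (Real.sqrt (1 - u ^ 2) * Real.arccos (Real.sqrt (1 - u ^ 2))
              - Real.sqrt (1 - Real.sqrt (1 - u ^ 2) ^ 2)
              + (1 / 3) * (1 - Real.sqrt (1 - u ^ 2) ^ 2) ^ ((3:ℝ)/2) + 2 / 3) := by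
        funext u
        rw [hg, hG]
      rw [hfun]
      apply Continuous.mul
      · exact Real.continuous_arccos.sub (continuous_id.mul hcont_sqrt)
      · apply Continuous.add
        apply Continuous.add
        apply Continuous.sub
        · exact hcont_sqrt.mul (Real.continuous_arccos.comp hcont_sqrt)
        · exact Real.continuous_sqrt.comp (by continuity)
        · exact continuous_const.mul
            ((Real.continuous_rpow_const (by norm_num : (0:ℝ) ≤ 3/2)).comp (by continuity))
        · exact continuous_const
  rw [key, hFdef]
  simp only [Real.arccos_one, Real.arccos_zero, Real.sqrt_one]
  norm_num [Real.sqrt_eq_zero]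
  ring
end

section
/- Let g(x) = arccos(x) - x·√(1-x²) and G(1) = ∫₀¹ g(u) du = 2/3. Then ∫₀¹ g(x₁) · (∫_{√(1-x₁²)}^1 dx₂) dx₁ = 2/3 - π²/16. -/
open Real

noncomputable def Haux (x : ℝ) : ℝ :=
  x * Real.arccos x - Real.sqrt (1 - x ^ 2)
    + (Real.arccos x) ^ 2 / 4 - Real.arccos x * x * Real.sqrt (1 - x ^ 2) / 2
    - (2 * x ^ 2 - 1) / 8 + Real.sqrt (1 - x ^ 2) * (1 - x ^ 2) / 3
    + x ^ 2 / 2 - x ^ 4 / 4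

lemma Haux_deriv {x : ℝ} (hx : x ∈ Set.Ioo (0:ℝ) 1) :
    HasDerivAt Haux
      ((Real.arccos x - x * Real.sqrt (1 - x ^ 2)) * (1 - Real.sqrt (1 - x ^ 2))) x := by
  have hx0 : 0 < x := hx.1
  have hx1 : x < 1 := hx.2
  have h1 : (0:ℝ) < 1 - x ^ 2 := by nlinarith
  have hs : Real.sqrt (1 - x ^ 2) ≠ 0 := by positivity
  have hspos : 0 < Real.sqrt (1 - x ^ 2) := by positivity
  have hs2 : Real.sqrt (1 - x ^ 2) ^ 2 = 1 - x ^ 2 := Real.sq_sqrt h1.le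
  have dA : HasDerivAt Real.arccos (-(1 / Real.sqrt (1 - x ^ 2))) x :=
    Real.hasDerivAt_arccos (by linarith) (by linarith)
  have dS := HasDerivAt.sqrt ((hasDerivAt_pow 2 x).const_sub 1) (ne_of_gt h1)
  have dX : HasDerivAt (fun y : ℝ => y) 1 x := hasDerivAt_id x
  have dH := (((((((((dX.mul dA).sub dS).add
      ((dA.pow 2).div_const 4)).sub
      (((dA.mul dX).mul dS).div_const 2)).sub
      ((((hasDerivAt_pow 2 x).const_mul 2).sub_const 1).div_const 8)).add
      ((dS.mul ((hasDerivAt_pow 2 x).const_sub 1)).div_const 3)).add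
      ((hasDerivAt_pow 2 x).div_const 2)).sub
      ((hasDerivAt_pow 4 x).div_const 4)))
  convert dH using 1
  · rfl
  · rfl
  · rfl
  have hss : Real.sqrt (1 - x ^ 2) * Real.sqrt (1 - x ^ 2) = 1 - x ^ 2 :=
    Real.mul_self_sqrt h1.le
  simp only [Pi.mul_apply]
  field_simp
  norm_num
  linear_combination (-192 * Real.arccos x - 128 * x
    + 384 * Real.sqrt (1 - x ^ 2) * x) * hs2

lemma Haux_cont : Continuous Haux := by
  have hs : Continuous fun x : ℝ => Real.sqrt (1 - x ^ 2) :=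
    Real.continuous_sqrt.comp (by continuity)
  have ha := Real.continuous_arccos
  unfold Haux; fun_prop

theorem integral_g_outer_band
    (g : ℝ → ℝ) (hg : ∀ x, g x = Real.arccos x - x * Real.sqrt (1 - x ^ 2))
    (hG1 : ∫ u in (0:ℝ)..1, g u = 2 / 3) :
    ∫ x₁ in (0:ℝ)..1, g x₁ * (∫ _x₂ in (Real.sqrt (1 - x₁ ^ 2))..1, (1:ℝ)) =
      2 / 3 - Real.pi ^ 2 / 16 := by
  have hinner : ∀ x : ℝ, (∫ _x₂ in (Real.sqrt (1 - x ^ 2))..1, (1:ℝ)) =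
      1 - Real.sqrt (1 - x ^ 2) := by intro x; simp
  simp_rw [hinner, hg]
  have hs : Continuous fun x : ℝ => Real.sqrt (1 - x ^ 2) :=
    Real.continuous_sqrt.comp (by continuity)
  have hcont : Continuous fun x : ℝ =>
      (Real.arccos x - x * Real.sqrt (1 - x ^ 2)) * (1 - Real.sqrt (1 - x ^ 2)) := by
    have := Real.continuous_arccos
    fun_prop
  have key : ∫ x in (0:ℝ)..1,
      (Real.arccos x - x * Real.sqrt (1 - x ^ 2)) * (1 - Real.sqrt (1 - x ^ 2))
      = Haux 1 - Haux 0 := by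
    apply intervalIntegral.integral_eq_sub_of_hasDeriv_right_of_le (by norm_num)
      Haux_cont.continuousOn
      (fun x hx => (Haux_deriv hx).hasDerivWithinAt)
      (hcont.intervalIntegrable 0 1)
  rw [key]
  unfold Haux
  norm_num [Real.arccos_one, Real.arccos_zero]
  ring
end

section
/- Let g(x) = arccos(x) - x·√(1-x²). Then T₁ := ∫₀¹ (π - g(x))² dx = π² - 2π/3 - 64/45. -/
open Real

attribute [local fun_prop] Real.continuous_arccos

noncomputable def Faux (x : ℝ) : ℝ :=
  π^2*x - 2*π*(x*arccos x - Real.sqrt (1-x^2)) - 2*π/3*(Real.sqrt (1-x^2))^3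
    + x*(arccos x)^2 - 2*(Real.sqrt (1-x^2)*arccos x) - 2*x
    + 2/3*(arccos x*(Real.sqrt (1-x^2))^3) + 2/3*x - 2/9*x^3 + 1/3*x^3 - 1/5*x^5

lemma Faux_deriv {x : ℝ} (hx : x ∈ Set.Ioo (0:ℝ) 1) :
    HasDerivAt Faux ((π - (arccos x - x * Real.sqrt (1 - x^2)))^2) x := by
  obtain ⟨h0, h1⟩ := hx
  have hx1 : (0:ℝ) < 1 - x^2 := by nlinarith
  set s := Real.sqrt (1 - x^2) with hs_def
  have hs : 0 < s := Real.sqrt_pos.mpr hx1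
  have hs2 : s^2 = 1 - x^2 := Real.sq_sqrt hx1.le
  have hA : HasDerivAt arccos (-(1/s)) x :=
    Real.hasDerivAt_arccos (by linarith) (by linarith)
  have hin : HasDerivAt (fun y : ℝ => 1 - y^2) (-(2*x)) x := by
    simpa using ((hasDerivAt_pow 2 x).const_sub 1)
  have hs' : HasDerivAt (fun y => Real.sqrt (1 - y^2)) (-x/s) x := by
    have := (Real.hasDerivAt_sqrt (ne_of_gt hx1)).comp x hin
    convert this using 1
    · rfl
    · rfl
    · rfl
    · rw [← hs_def]
      field_simp
  have hs3 : HasDerivAt (fun y => (Real.sqrt (1 - y^2))^3) (3*s^2*(-x/s)) x := by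
    simpa using hs'.fun_pow 3
  have hid := hasDerivAt_id x
  have H : HasDerivAt Faux
      (π^2*1 - 2*π*((1*arccos x + x*(-(1/s))) - (-x/s)) - 2*π/3*(3*s^2*(-x/s))
        + (1*(arccos x)^2 + x*(2*arccos x^1*(-(1/s)))) - 2*((-x/s)*arccos x + s*(-(1/s))) - 2*1
        + 2/3*((-(1/s))*s^3 + arccos x*(3*s^2*(-x/s))) + 2/3*1 - 2/9*(3*x^2) + 1/3*(3*x^2) - 1/5*(5*x^4)) x := by
    unfold Faux
    exact (((((((((((hid.const_mul (π^2)).sub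
      (((hid.mul hA).sub hs').const_mul (2*π))).sub
      (hs3.const_mul (2*π/3))).add
      (hid.mul (hA.pow 2))).sub
      ((hs'.mul hA).const_mul 2)).sub
      (hid.const_mul 2)).add
      ((hA.mul hs3).const_mul (2/3))).add
      (hid.const_mul (2/3))).sub
      ((by simpa using (hasDerivAt_pow 3 x).const_mul (2/9 : ℝ)))).add
      ((by simpa using (hasDerivAt_pow 3 x).const_mul (1/3 : ℝ)))).sub
      ((by simpa using (hasDerivAt_pow 5 x).const_mul (1/5 : ℝ))))
  convert H using 1
  have hsne : s ≠ 0 := ne_of_gt hs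
  field_simp
  linear_combination s*(18 + 27*x^2) * hs2

theorem T1_value
    (g : ℝ → ℝ) (hg : ∀ x, g x = Real.arccos x - x * Real.sqrt (1 - x ^ 2)) :
    ∫ x in (0:ℝ)..1, (Real.pi - g x) ^ 2 =
      Real.pi ^ 2 - 2 * Real.pi / 3 - 64 / 45 := by
  have hsc : Continuous fun x : ℝ => Real.sqrt (1 - x^2) :=
    Real.continuous_sqrt.comp (by fun_prop)
  have hcF : Continuous Faux := by
    unfold Faux
    set_option maxHeartbeats 2000000 in fun_prop
  have hci : Continuous fun x : ℝ => (π - (arccos x - x * Real.sqrt (1 - x^2)))^2 := by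
    exact ((continuous_const.sub (Real.continuous_arccos.sub (continuous_id.mul hsc))).pow 2)
  have key := intervalIntegral.integral_eq_sub_of_hasDerivAt_of_le (f := Faux)
    (f' := fun x => (π - (arccos x - x * Real.sqrt (1 - x^2)))^2)
    (by norm_num) hcF.continuousOn (fun x hx => Faux_deriv hx)
    (hci.intervalIntegrable 0 1)
  have hgeq : ∀ x : ℝ, (Real.pi - g x) ^ 2 = (π - (arccos x - x * Real.sqrt (1 - x^2)))^2 := by
    intro x; rw [hg]
  simp only [hgeq]
  rw [key]
  unfold Faux
  norm_num [Real.arccos_one, Real.arccos_zero, Real.sqrt_one]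
  ring
end

section
/- Let g(x) = arccos(x) - x·√(1-x²). Then the double integral ∫₀¹ ∫_{√(1-x₁²)}^1 (π - g(x₁) - g(x₂))² dx₂ dx₁ = -π³/16 + π² - 9π/8 - 128/45. -/
open Real Set intervalIntegral

noncomputable section

namespace T2aux

def A (x : ℝ) : ℝ :=
  x * Real.arccos x - Real.sqrt (1 - x ^ 2) + (Real.sqrt (1 - x ^ 2)) ^ 3 / 3

def B (x : ℝ) : ℝ :=
  x * (Real.arccos x - x * Real.sqrt (1 - x ^ 2)) ^ 2
    - (4 / 3) * (Real.sqrt (1 - x ^ 2)) ^ 3 * (Real.arccos x - x * Real.sqrt (1 - x ^ 2))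
    - (8 / 3) * (x - 2 * x ^ 3 / 3 + x ^ 5 / 5)

def H (c x : ℝ) : ℝ := c ^ 2 * x - 2 * c * A x + B x

def F (u : ℝ) : ℝ :=
  Real.pi ^ 2 - 2 * Real.pi * u + u ^ 2 + (4 * Real.pi / 3) * u ^ 3 - u ^ 4 - 64 / 45
    + (Real.arccos u) ^ 2 - 2 * Real.pi * Real.arccos u
    + Real.sqrt (1 - u ^ 2) *
        (-(Real.pi ^ 2) / 4 + 64 / 45 + 2 * Real.pi * u - (148 / 45) * u ^ 2 + (28 / 15) * u ^ 4)
    - 2 * u * Real.sqrt (1 - u ^ 2) * Real.arccos u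

def G (u : ℝ) : ℝ :=
  (Real.pi ^ 2 * u - Real.pi * u ^ 2 + u ^ 3 / 3 + Real.pi * u ^ 4 / 3 - u ^ 5 / 5 - 64 / 45 * u)
    + (u * (Real.arccos u) ^ 2 - 2 * Real.sqrt (1 - u ^ 2) * Real.arccos u - 2 * u)
    - 2 * Real.pi * (u * Real.arccos u - Real.sqrt (1 - u ^ 2))
    + ((-(Real.pi ^ 2) / 4 + 64 / 45) / 2) * (u * Real.sqrt (1 - u ^ 2) - Real.arccos u)
    - (2 * Real.pi / 3) * (Real.sqrt (1 - u ^ 2)) ^ 3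
    + (-148 / 45) * ((u * Real.sqrt (1 - u ^ 2) - Real.arccos u) / 8
        - u * (Real.sqrt (1 - u ^ 2)) ^ 3 / 4)
    + (28 / 15) * ((u * Real.sqrt (1 - u ^ 2) - Real.arccos u) / 16
        - u * (Real.sqrt (1 - u ^ 2)) ^ 3 / 8 - u ^ 3 * (Real.sqrt (1 - u ^ 2)) ^ 3 / 6)
    + (2 / 3) * ((Real.sqrt (1 - u ^ 2)) ^ 3 * Real.arccos u + u - u ^ 3 / 3)

attribute [local fun_prop] Real.continuous_arccos Real.continuous_sqrt

lemma csqrt : Continuous fun u : ℝ => Real.sqrt (1 - u ^ 2) :=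
  (continuous_const.sub (continuous_pow 2)).sqrt

lemma dsqrt {x : ℝ} (hx : x ∈ Set.Ioo (0:ℝ) 1) :
    HasDerivAt (fun y : ℝ => Real.sqrt (1 - y ^ 2)) (-x / Real.sqrt (1 - x ^ 2)) x := by
  have h1 : (0:ℝ) < 1 - x ^ 2 := by nlinarith [hx.1, hx.2]
  have h : HasDerivAt (fun y : ℝ => 1 - y ^ 2) (-(2 * x)) x := by
    simpa using ((hasDerivAt_pow 2 x).const_sub 1)
  have hs0 : Real.sqrt (1 - x ^ 2) ≠ 0 := by positivity
  have h2 := h.sqrt (by positivity)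
  have h3 : -x / Real.sqrt (1 - x ^ 2) = -(2 * x) / (2 * Real.sqrt (1 - x ^ 2)) := by
    field_simp
  rw [h3]; exact h2

lemma dcube {x : ℝ} (hx : x ∈ Set.Ioo (0:ℝ) 1) :
    HasDerivAt (fun y : ℝ => (Real.sqrt (1 - y ^ 2)) ^ 3)
      (-3 * x * Real.sqrt (1 - x ^ 2)) x := by
  have h1 : (0:ℝ) < 1 - x ^ 2 := by nlinarith [hx.1, hx.2]
  have hs0 : Real.sqrt (1 - x ^ 2) ≠ 0 := by positivity
  have hs2 : Real.sqrt (1 - x ^ 2) ^ 2 = 1 - x ^ 2 := Real.sq_sqrt h1.le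
  have h2 := (dsqrt hx).pow 3
  have h3 : -3 * x * Real.sqrt (1 - x ^ 2)
      = (3 : ℕ) * Real.sqrt (1 - x ^ 2) ^ (3 - 1) * (-x / Real.sqrt (1 - x ^ 2)) := by
    push_cast
    field_simp
  rw [h3]; exact h2

lemma dg {x : ℝ} (hx : x ∈ Set.Ioo (0:ℝ) 1) :
    HasDerivAt (fun y : ℝ => Real.arccos y - y * Real.sqrt (1 - y ^ 2))
      (-2 * Real.sqrt (1 - x ^ 2)) x := by
  have h1 : (0:ℝ) < 1 - x ^ 2 := by nlinarith [hx.1, hx.2]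
  have hs0 : Real.sqrt (1 - x ^ 2) ≠ 0 := by positivity
  have hs2 : Real.sqrt (1 - x ^ 2) ^ 2 = 1 - x ^ 2 := Real.sq_sqrt h1.le
  have hne1 : x ≠ (1:ℝ) := ne_of_lt hx.2
  have hnem1 : x ≠ (-1:ℝ) := by linarith [hx.1]
  have h2 := (Real.hasDerivAt_arccos hnem1 hne1).sub ((hasDerivAt_id x).mul (dsqrt hx))
  have hfe : (fun y : ℝ => Real.arccos y - y * Real.sqrt (1 - y ^ 2))
      = fun y : ℝ => Real.arccos y - id y * Real.sqrt (1 - y ^ 2) := by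
    funext y; simp
  have h3 : -2 * Real.sqrt (1 - x ^ 2)
      = -(1 / Real.sqrt (1 - x ^ 2))
        - (1 * Real.sqrt (1 - x ^ 2) + id x * (-x / Real.sqrt (1 - x ^ 2))) := by
    simp only [id_eq]
    field_simp
    linear_combination (-1 : ℝ) * hs2
  rw [hfe, h3]; exact h2

lemma dA {x : ℝ} (hx : x ∈ Set.Ioo (0:ℝ) 1) :
    HasDerivAt A (Real.arccos x - x * Real.sqrt (1 - x ^ 2)) x := by
  have h1 : (0:ℝ) < 1 - x ^ 2 := by nlinarith [hx.1, hx.2]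
  have hs0 : Real.sqrt (1 - x ^ 2) ≠ 0 := by positivity
  have hne1 : x ≠ (1:ℝ) := ne_of_lt hx.2
  have hnem1 : x ≠ (-1:ℝ) := by linarith [hx.1]
  have h2 := (((hasDerivAt_id x).mul (Real.hasDerivAt_arccos hnem1 hne1)).sub
    (dsqrt hx)).add ((dcube hx).div_const 3)
  have hfe : A = fun y : ℝ => id y * Real.arccos y - Real.sqrt (1 - y ^ 2)
      + (Real.sqrt (1 - y ^ 2)) ^ 3 / 3 := by
    funext y; simp [A]
  have h3 : Real.arccos x - x * Real.sqrt (1 - x ^ 2)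
      = (1 * Real.arccos x + id x * -(1 / Real.sqrt (1 - x ^ 2)))
        - (-x / Real.sqrt (1 - x ^ 2)) + (-3 * x * Real.sqrt (1 - x ^ 2)) / 3 := by
    simp only [id_eq]
    field_simp
    ring
  rw [hfe, h3]; exact h2

lemma dB {x : ℝ} (hx : x ∈ Set.Ioo (0:ℝ) 1) :
    HasDerivAt B ((Real.arccos x - x * Real.sqrt (1 - x ^ 2)) ^ 2) x := by
  have h1 : (0:ℝ) < 1 - x ^ 2 := by nlinarith [hx.1, hx.2]
  have hs2 : Real.sqrt (1 - x ^ 2) ^ 2 = 1 - x ^ 2 := Real.sq_sqrt h1.le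
  have hpoly : HasDerivAt (fun y : ℝ => (8 / 3 : ℝ) * (y - 2 * y ^ 3 / 3 + y ^ 5 / 5))
      ((8 / 3) * (1 - 2 * x ^ 2 + x ^ 4)) x := by
    have h2 := (((hasDerivAt_id x).sub ((hasDerivAt_pow 3 x).const_mul (2/3 : ℝ))).add
      ((hasDerivAt_pow 5 x).const_mul (1/5 : ℝ))).const_mul (8/3 : ℝ)
    have hfe : (fun y : ℝ => (8 / 3 : ℝ) * (y - 2 * y ^ 3 / 3 + y ^ 5 / 5))
        = fun y : ℝ => (8/3 : ℝ) * (id y - (2/3 : ℝ) * y ^ 3 + (1/5 : ℝ) * y ^ 5) := by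
      funext y; simp only [id_eq]; ring
    have h3 : (8 / 3 : ℝ) * (1 - 2 * x ^ 2 + x ^ 4)
        = (8/3 : ℝ) * (1 - (2/3 : ℝ) * ((3:ℕ) * x ^ (3-1)) + (1/5 : ℝ) * ((5:ℕ) * x ^ (5-1))) := by
      push_cast; ring
    rw [hfe, h3]; exact h2
  have h2 := (((hasDerivAt_id x).mul ((dg hx).pow 2)).sub
    (((dcube hx).mul (dg hx)).const_mul (4/3 : ℝ))).sub hpoly
  have hfe : B = fun y : ℝ => id y * (Real.arccos y - y * Real.sqrt (1 - y ^ 2)) ^ 2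
      - (4/3 : ℝ) * ((Real.sqrt (1 - y ^ 2)) ^ 3 * (Real.arccos y - y * Real.sqrt (1 - y ^ 2)))
      - (8 / 3 : ℝ) * (y - 2 * y ^ 3 / 3 + y ^ 5 / 5) := by
    funext y; simp only [B, id_eq]; ring
  have h3 : (Real.arccos x - x * Real.sqrt (1 - x ^ 2)) ^ 2
      = (1 * (Real.arccos x - x * Real.sqrt (1 - x ^ 2)) ^ 2
          + id x * ((2:ℕ) * (Real.arccos x - x * Real.sqrt (1 - x ^ 2)) ^ (2-1)
              * (-2 * Real.sqrt (1 - x ^ 2))))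
        - (4/3 : ℝ) * ((-3 * x * Real.sqrt (1 - x ^ 2))
              * (Real.arccos x - x * Real.sqrt (1 - x ^ 2))
            + (Real.sqrt (1 - x ^ 2)) ^ 3 * (-2 * Real.sqrt (1 - x ^ 2)))
        - (8 / 3) * (1 - 2 * x ^ 2 + x ^ 4) := by
    push_cast
    simp only [id_eq]
    linear_combination (-8/3 : ℝ) * (Real.sqrt (1 - x ^ 2) ^ 2 + 1 - x ^ 2) * hs2
  rw [hfe, h3]; exact h2

lemma dH {c x : ℝ} (hx : x ∈ Set.Ioo (0:ℝ) 1) :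
    HasDerivAt (H c) ((c - (Real.arccos x - x * Real.sqrt (1 - x ^ 2))) ^ 2) x := by
  have h2 := (((hasDerivAt_id x).const_mul (c ^ 2)).sub ((dA hx).const_mul (2 * c))).add (dB hx)
  have hfe : H c = fun y : ℝ => c ^ 2 * id y - (2 * c) * A y + B y := by
    funext y; simp only [H, id_eq]
  have h3 : (c - (Real.arccos x - x * Real.sqrt (1 - x ^ 2))) ^ 2
      = c ^ 2 * 1 - (2 * c) * (Real.arccos x - x * Real.sqrt (1 - x ^ 2))
        + (Real.arccos x - x * Real.sqrt (1 - x ^ 2)) ^ 2 := by ring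
  rw [hfe, h3]; exact h2

lemma Hcont (c : ℝ) : Continuous (H c) := by
  unfold H A B
  fun_prop

lemma alg1 (u s a : ℝ) (h : s ^ 2 = 1 - u ^ 2) :
    (Real.pi - a + u * s) ^ 2 - 64 / 45 -
      ((Real.pi - a + u * s) ^ 2 * s
        - 2 * (Real.pi - a + u * s) * (s * (Real.pi / 2 - a) - u + u ^ 3 / 3)
        + (s * ((Real.pi / 2 - a) - s * u) ^ 2
            - (4 / 3) * u ^ 3 * ((Real.pi / 2 - a) - s * u)
            - (8 / 3) * (s - 2 * s ^ 3 / 3 + s ^ 5 / 5))) =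
    Real.pi ^ 2 - 2 * Real.pi * u + u ^ 2 + (4 * Real.pi / 3) * u ^ 3 - u ^ 4 - 64 / 45
      + a ^ 2 - 2 * Real.pi * a
      + s * (-(Real.pi ^ 2) / 4 + 64 / 45 + 2 * Real.pi * u - (148 / 45) * u ^ 2
          + (28 / 15) * u ^ 4)
      - 2 * u * s * a := by
  linear_combination ((-2 : ℝ) * u * a + u ^ 2 - (56/45) * s - (38/15) * s * u ^ 2
    + (8/15) * s ^ 3) * h

lemma inner_val {u : ℝ} (hu : u ∈ Set.Icc (0:ℝ) 1) :
    (∫ x in (Real.sqrt (1 - u ^ 2))..1,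
        (Real.pi - (Real.arccos u - u * Real.sqrt (1 - u ^ 2))
          - (Real.arccos x - x * Real.sqrt (1 - x ^ 2))) ^ 2) = F u := by
  set c : ℝ := Real.pi - (Real.arccos u - u * Real.sqrt (1 - u ^ 2)) with hc
  set s : ℝ := Real.sqrt (1 - u ^ 2) with hsdef
  have hu2 : (0:ℝ) ≤ 1 - u ^ 2 := by nlinarith [hu.1, hu.2]
  have hs0 : 0 ≤ s := Real.sqrt_nonneg _
  have hs2 : s ^ 2 = 1 - u ^ 2 := Real.sq_sqrt hu2
  have hs1 : s ≤ 1 := by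
    rw [hsdef]
    exact Real.sqrt_le_one.2 (by nlinarith [hu.1])
  have key : (∫ x in s..1,
      (c - (Real.arccos x - x * Real.sqrt (1 - x ^ 2))) ^ 2) = H c 1 - H c s := by
    refine intervalIntegral.integral_eq_sub_of_hasDeriv_right_of_le hs1
      ((Hcont c).continuousOn) (fun x hx => ?_) ?_
    · exact (dH ⟨lt_of_le_of_lt hs0 hx.1, hx.2⟩).hasDerivWithinAt
    · exact Continuous.intervalIntegrable (by fun_prop) _ _
  have hint : (∫ x in s..1,
      (Real.pi - (Real.arccos u - u * Real.sqrt (1 - u ^ 2))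
        - (Real.arccos x - x * Real.sqrt (1 - x ^ 2))) ^ 2) = H c 1 - H c s := key
  rw [hint]
  have e1 : Real.sqrt (1 - (1:ℝ) ^ 2) = 0 := by norm_num
  have hH1 : H c 1 = c ^ 2 - 64 / 45 := by
    unfold H A B
    rw [e1, Real.arccos_one]
    ring
  have hgsq : Real.sqrt (1 - s ^ 2) = u := by
    rw [hs2]
    simpa using Real.sqrt_sq hu.1
  have harc : Real.arccos s = Real.pi / 2 - Real.arccos u := by
    have hsin : s = Real.sin (Real.arccos u) := (Real.sin_arccos u).symm
    have h1 : Real.arccos u ≤ Real.pi / 2 := Real.arccos_le_pi_div_two.2 hu.1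
    have h2 : 0 ≤ Real.arccos u := Real.arccos_nonneg u
    rw [hsin, ← Real.cos_pi_div_two_sub]
    exact Real.arccos_cos (by linarith) (by linarith [Real.pi_pos])
  have hHs : H c s = c ^ 2 * s
      - 2 * c * (s * (Real.pi / 2 - Real.arccos u) - u + u ^ 3 / 3)
      + (s * ((Real.pi / 2 - Real.arccos u) - s * u) ^ 2
          - (4 / 3) * u ^ 3 * ((Real.pi / 2 - Real.arccos u) - s * u)
          - (8 / 3) * (s - 2 * s ^ 3 / 3 + s ^ 5 / 5)) := by
    unfold H A B
    rw [harc, hgsq]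
  rw [hH1, hHs]
  have hc' : c = Real.pi - Real.arccos u + u * s := by rw [hc]; ring
  rw [hc']
  unfold F
  exact alg1 u s (Real.arccos u) hs2

lemma Gcont : Continuous G := by
  unfold G
  fun_prop

lemma Fcont : Continuous F := by
  unfold F
  fun_prop

lemma dG {u : ℝ} (hu : u ∈ Set.Ioo (0:ℝ) 1) : HasDerivAt G (F u) u := by
  have h1 : (0:ℝ) < 1 - u ^ 2 := by nlinarith [hu.1, hu.2]
  have hs0 : Real.sqrt (1 - u ^ 2) ≠ 0 := by positivity
  have hs2 : Real.sqrt (1 - u ^ 2) ^ 2 = 1 - u ^ 2 := Real.sq_sqrt h1.le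
  have hne1 : u ≠ (1:ℝ) := ne_of_lt hu.2
  have hnem1 : u ≠ (-1:ℝ) := by linarith [hu.1]
  have harc := Real.hasDerivAt_arccos hnem1 hne1
  have hsq := dsqrt hu
  have hcb := dcube hu
  have hP : HasDerivAt (fun y : ℝ => Real.pi ^ 2 * y - Real.pi * y ^ 2 + y ^ 3 / 3
      + Real.pi * y ^ 4 / 3 - y ^ 5 / 5 - 64 / 45 * y)
      (Real.pi ^ 2 - 2 * Real.pi * u + u ^ 2 + (4 * Real.pi / 3) * u ^ 3 - u ^ 4 - 64 / 45) u := by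
    have h2 := ((((((hasDerivAt_id u).const_mul (Real.pi ^ 2)).sub
      ((hasDerivAt_pow 2 u).const_mul Real.pi)).add
      ((hasDerivAt_pow 3 u).div_const 3)).add
      (((hasDerivAt_pow 4 u).const_mul Real.pi).div_const 3)).sub
      ((hasDerivAt_pow 5 u).div_const 5)).sub ((hasDerivAt_id u).const_mul (64/45 : ℝ))
    have hfe : (fun y : ℝ => Real.pi ^ 2 * y - Real.pi * y ^ 2 + y ^ 3 / 3
        + Real.pi * y ^ 4 / 3 - y ^ 5 / 5 - 64 / 45 * y)
        = fun y : ℝ => Real.pi ^ 2 * id y - Real.pi * y ^ 2 + y ^ 3 / 3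
          + Real.pi * y ^ 4 / 3 - y ^ 5 / 5 - (64/45 : ℝ) * id y := by
      funext y; simp only [id_eq]
    have h3 : Real.pi ^ 2 - 2 * Real.pi * u + u ^ 2 + (4 * Real.pi / 3) * u ^ 3 - u ^ 4 - 64/45
        = Real.pi ^ 2 * 1 - Real.pi * ((2:ℕ) * u ^ (2-1)) + ((3:ℕ) * u ^ (3-1)) / 3
          + Real.pi * ((4:ℕ) * u ^ (4-1)) / 3 - ((5:ℕ) * u ^ (5-1)) / 5 - (64/45 : ℝ) * 1 := by
      push_cast; ring
    rw [hfe, h3]; exact h2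
  have hT1 : HasDerivAt (fun y : ℝ => y * (Real.arccos y) ^ 2
      - 2 * Real.sqrt (1 - y ^ 2) * Real.arccos y - 2 * y) ((Real.arccos u) ^ 2) u := by
    have h2 := (((hasDerivAt_id u).mul (harc.pow 2)).sub
      ((hsq.const_mul (2:ℝ)).mul harc)).sub ((hasDerivAt_id u).const_mul 2)
    have hfe : (fun y : ℝ => y * (Real.arccos y) ^ 2
        - 2 * Real.sqrt (1 - y ^ 2) * Real.arccos y - 2 * y)
        = fun y : ℝ => id y * (Real.arccos y) ^ 2
          - (2 * Real.sqrt (1 - y ^ 2)) * Real.arccos y - (2:ℝ) * id y := by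
      funext y; simp only [id_eq]
    have h3 : (Real.arccos u) ^ 2
        = (1 * (Real.arccos u) ^ 2 + id u * ((2:ℕ) * (Real.arccos u) ^ (2-1)
            * -(1 / Real.sqrt (1 - u ^ 2))))
          - ((2 * (-u / Real.sqrt (1 - u ^ 2))) * Real.arccos u
            + (2 * Real.sqrt (1 - u ^ 2)) * -(1 / Real.sqrt (1 - u ^ 2)))
          - (2:ℝ) * 1 := by
      push_cast
      simp only [id_eq]
      field_simp
      ring
    rw [hfe, h3]; exact h2
  have hT2 : HasDerivAt (fun y : ℝ => y * Real.arccos y - Real.sqrt (1 - y ^ 2))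
      (Real.arccos u) u := by
    have h2 := ((hasDerivAt_id u).mul harc).sub hsq
    have hfe : (fun y : ℝ => y * Real.arccos y - Real.sqrt (1 - y ^ 2))
        = fun y : ℝ => id y * Real.arccos y - Real.sqrt (1 - y ^ 2) := by
      funext y; simp only [id_eq]
    have h3 : Real.arccos u
        = (1 * Real.arccos u + id u * -(1 / Real.sqrt (1 - u ^ 2)))
          - (-u / Real.sqrt (1 - u ^ 2)) := by
      simp only [id_eq]
      field_simp
      ring
    rw [hfe, h3]; exact h2
  have hT3 : HasDerivAt (fun y : ℝ => y * Real.sqrt (1 - y ^ 2) - Real.arccos y)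
      (2 * Real.sqrt (1 - u ^ 2)) u := by
    have h2 := ((hasDerivAt_id u).mul hsq).sub harc
    have hfe : (fun y : ℝ => y * Real.sqrt (1 - y ^ 2) - Real.arccos y)
        = fun y : ℝ => id y * Real.sqrt (1 - y ^ 2) - Real.arccos y := by
      funext y; simp only [id_eq]
    have h3 : 2 * Real.sqrt (1 - u ^ 2)
        = (1 * Real.sqrt (1 - u ^ 2) + id u * (-u / Real.sqrt (1 - u ^ 2)))
          - -(1 / Real.sqrt (1 - u ^ 2)) := by
      simp only [id_eq]
      field_simp
      linear_combination hs2
    rw [hfe, h3]; exact h2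
  have hT5 : HasDerivAt (fun y : ℝ => y * (Real.sqrt (1 - y ^ 2)) ^ 3)
      ((Real.sqrt (1 - u ^ 2)) ^ 3 - 3 * u ^ 2 * Real.sqrt (1 - u ^ 2)) u := by
    have h2 := (hasDerivAt_id u).mul hcb
    have hfe : (fun y : ℝ => y * (Real.sqrt (1 - y ^ 2)) ^ 3)
        = fun y : ℝ => id y * (Real.sqrt (1 - y ^ 2)) ^ 3 := by
      funext y; simp only [id_eq]
    have h3 : (Real.sqrt (1 - u ^ 2)) ^ 3 - 3 * u ^ 2 * Real.sqrt (1 - u ^ 2)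
        = 1 * (Real.sqrt (1 - u ^ 2)) ^ 3 + id u * (-3 * u * Real.sqrt (1 - u ^ 2)) := by
      simp only [id_eq]; ring
    rw [hfe, h3]; exact h2
  have hT7 : HasDerivAt (fun y : ℝ => y ^ 3 * (Real.sqrt (1 - y ^ 2)) ^ 3)
      (3 * u ^ 2 * (Real.sqrt (1 - u ^ 2)) ^ 3 - 3 * u ^ 4 * Real.sqrt (1 - u ^ 2)) u := by
    have h2 := (hasDerivAt_pow 3 u).mul hcb
    have h3 : 3 * u ^ 2 * (Real.sqrt (1 - u ^ 2)) ^ 3 - 3 * u ^ 4 * Real.sqrt (1 - u ^ 2)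
        = (3:ℕ) * u ^ (3-1) * (Real.sqrt (1 - u ^ 2)) ^ 3
          + u ^ 3 * (-3 * u * Real.sqrt (1 - u ^ 2)) := by
      push_cast; ring
    rw [h3]; exact h2
  have hT8 : HasDerivAt (fun y : ℝ => (Real.sqrt (1 - y ^ 2)) ^ 3 * Real.arccos y
      + y - y ^ 3 / 3) (-3 * u * Real.sqrt (1 - u ^ 2) * Real.arccos u) u := by
    have h2 := ((hcb.mul harc).add (hasDerivAt_id u)).sub ((hasDerivAt_pow 3 u).div_const 3)
    have hfe : (fun y : ℝ => (Real.sqrt (1 - y ^ 2)) ^ 3 * Real.arccos y + y - y ^ 3 / 3)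
        = fun y : ℝ => (Real.sqrt (1 - y ^ 2)) ^ 3 * Real.arccos y + id y - y ^ 3 / 3 := by
      funext y; simp only [id_eq]
    have h3 : -3 * u * Real.sqrt (1 - u ^ 2) * Real.arccos u
        = ((-3 * u * Real.sqrt (1 - u ^ 2)) * Real.arccos u
            + (Real.sqrt (1 - u ^ 2)) ^ 3 * -(1 / Real.sqrt (1 - u ^ 2)) + 1)
          - ((3:ℕ) * u ^ (3-1)) / 3 := by
      push_cast
      field_simp
      linear_combination hs2
    rw [hfe, h3]; exact h2
  have hfull := ((((((hP.add hT1).sub (hT2.const_mul (2 * Real.pi))).add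
    (hT3.const_mul ((-(Real.pi ^ 2) / 4 + 64 / 45) / 2))).sub
    (hcb.const_mul (2 * Real.pi / 3))).add
    ((((hT3.div_const 8).sub (hT5.div_const 4))).const_mul (-148/45 : ℝ))).add
    ((((hT3.div_const 16).sub (hT5.div_const 8)).sub (hT7.div_const 6)).const_mul
      (28/15 : ℝ))).add
    ((hT8.const_mul (2/3 : ℝ)))
  have hfe : G = fun y : ℝ =>
      ((((((Real.pi ^ 2 * y - Real.pi * y ^ 2 + y ^ 3 / 3 + Real.pi * y ^ 4 / 3 - y ^ 5 / 5
          - 64 / 45 * y)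
        + (y * (Real.arccos y) ^ 2 - 2 * Real.sqrt (1 - y ^ 2) * Real.arccos y - 2 * y))
        - (2 * Real.pi) * (y * Real.arccos y - Real.sqrt (1 - y ^ 2)))
        + ((-(Real.pi ^ 2) / 4 + 64 / 45) / 2) * (y * Real.sqrt (1 - y ^ 2) - Real.arccos y))
        - (2 * Real.pi / 3) * (Real.sqrt (1 - y ^ 2)) ^ 3
        + (-148/45 : ℝ) * ((y * Real.sqrt (1 - y ^ 2) - Real.arccos y) / 8
            - y * (Real.sqrt (1 - y ^ 2)) ^ 3 / 4))
        + (28/15 : ℝ) * (((y * Real.sqrt (1 - y ^ 2) - Real.arccos y) / 16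
            - y * (Real.sqrt (1 - y ^ 2)) ^ 3 / 8) - y ^ 3 * (Real.sqrt (1 - y ^ 2)) ^ 3 / 6))
        + (2/3 : ℝ) * ((Real.sqrt (1 - y ^ 2)) ^ 3 * Real.arccos y + y - y ^ 3 / 3) := by
    funext y; simp only [G]
  have h3 : F u =
      ((((((Real.pi ^ 2 - 2 * Real.pi * u + u ^ 2 + (4 * Real.pi / 3) * u ^ 3 - u ^ 4 - 64 / 45)
        + (Real.arccos u) ^ 2)
        - (2 * Real.pi) * Real.arccos u)
        + ((-(Real.pi ^ 2) / 4 + 64 / 45) / 2) * (2 * Real.sqrt (1 - u ^ 2)))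
        - (2 * Real.pi / 3) * (-3 * u * Real.sqrt (1 - u ^ 2))
        + (-148/45 : ℝ) * ((2 * Real.sqrt (1 - u ^ 2)) / 8
            - ((Real.sqrt (1 - u ^ 2)) ^ 3 - 3 * u ^ 2 * Real.sqrt (1 - u ^ 2)) / 4))
        + (28/15 : ℝ) * (((2 * Real.sqrt (1 - u ^ 2)) / 16
            - ((Real.sqrt (1 - u ^ 2)) ^ 3 - 3 * u ^ 2 * Real.sqrt (1 - u ^ 2)) / 8)
          - (3 * u ^ 2 * (Real.sqrt (1 - u ^ 2)) ^ 3 - 3 * u ^ 4 * Real.sqrt (1 - u ^ 2)) / 6))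
        + (2/3 : ℝ) * (-3 * u * Real.sqrt (1 - u ^ 2) * Real.arccos u) := by
    simp only [F]
    linear_combination ((-53/90 : ℝ) * Real.sqrt (1 - u ^ 2)
      + (14/15 : ℝ) * u ^ 2 * Real.sqrt (1 - u ^ 2)) * hs2
  rw [hfe, h3]; exact hfull

end T2aux

theorem T2_value
    (g : ℝ → ℝ) (hg : ∀ x, g x = Real.arccos x - x * Real.sqrt (1 - x ^ 2)) :
    ∫ x₁ in (0:ℝ)..1, ∫ x₂ in (Real.sqrt (1 - x₁ ^ 2))..1,
        (Real.pi - g x₁ - g x₂) ^ 2 =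
      -Real.pi ^ 3 / 16 + Real.pi ^ 2 - 9 * Real.pi / 8 - 128 / 45 := by
  have hcong : ∀ u ∈ Set.uIcc (0:ℝ) 1,
      (∫ x₂ in (Real.sqrt (1 - u ^ 2))..1, (Real.pi - g u - g x₂) ^ 2) = T2aux.F u := by
    intro u hu
    rw [Set.uIcc_of_le (by norm_num : (0:ℝ) ≤ 1)] at hu
    simp only [hg]
    exact T2aux.inner_val hu
  rw [intervalIntegral.integral_congr hcong]
  have key : (∫ u in (0:ℝ)..1, T2aux.F u) = T2aux.G 1 - T2aux.G 0 := by
    refine intervalIntegral.integral_eq_sub_of_hasDeriv_right_of_le (by norm_num)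
      (T2aux.Gcont.continuousOn) (fun u hu => (T2aux.dG hu).hasDerivWithinAt) ?_
    exact T2aux.Fcont.intervalIntegrable _ _
  rw [key]
  have e1 : Real.sqrt (1 - (1:ℝ) ^ 2) = 0 := by norm_num
  have e0 : Real.sqrt (1 - (0:ℝ) ^ 2) = 1 := by norm_num
  simp only [T2aux.G, e1, e0, Real.arccos_one, Real.arccos_zero]
  ring
end
end

section
/- Let g(x) = arccos(x) - x·√(1-x²). Then ∫₀¹ ∫₀^{√(1-x₁²)} (3π/4 + x₁x₂ - (g(x₁)+g(x₂))/2)² dx₂ dx₁ = π³/16 + 19π/192 + 2/9. -/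
noncomputable def Eo (x : ℝ) : ℝ :=
  Real.pi * (-1/3 + 3*x/2 - 7*x^3/6)
    + Real.sqrt (1 - x ^ 2) * (Real.pi^2/4 - 16/45 - x/3 + 731*x^2/360 - 31*x^4/20)
    + Real.arccos x * (1/3 - x/8)

noncomputable def Phi (K X t : ℝ) : ℝ :=
  (-(X*Real.pi)/16 + (K^2 - 1/3)*t + (K*X)*t^2 + (1/36 + X^2/3)*t^3 + 0*t^4 + (-(1/20))*t^5)
  + (X/8 + (-K)*t + (-(X/2))*t^2 + 0*t^3 + 0*t^4 + 0*t^5) * Real.arccos t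
  + (0 + (1/4)*t + 0*t^2 + 0*t^3 + 0*t^4 + 0*t^5) * Real.arccos t ^ 2
  + (2*K/3 + (X/8)*t + (K/3)*t^2 + (X/4)*t^3 + 0*t^4 + 0*t^5) * Real.sqrt (1 - t ^ 2)
  + (-(1/3) + 0*t + (-(1/6))*t^2 + 0*t^3 + 0*t^4 + 0*t^5) * Real.arccos t * Real.sqrt (1 - t ^ 2)

noncomputable def Psi (x : ℝ) : ℝ :=
  (-5*Real.pi/192 + Real.pi^3/16 + (-(Real.pi/3))*x + (3*Real.pi/4)*x^2 + 0*x^3 + (-(7*Real.pi/24))*x^4 + 0*x^5)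
  + (5/96 - Real.pi^2/8 + (1/3)*x + (-(1/16))*x^2 + 0*x^3 + 0*x^4 + 0*x^5) * Real.arccos x
  + (-(2/9) + (-(437/1440) + Real.pi^2/8)*x + (-(1/9))*x^2 + (103/180)*x^3 + 0*x^4 + (-(31/120))*x^5) * Real.sqrt (1 - x ^ 2)

lemma contSq : Continuous (fun x : ℝ => Real.sqrt (1 - x ^ 2)) :=
  Real.continuous_sqrt.comp (continuous_const.sub (continuous_pow 2))

lemma contEo : Continuous Eo := by
  unfold Eo
  exact ((continuous_const.mul (by fun_prop)).add
    (contSq.mul (by fun_prop))).add (Real.continuous_arccos.mul (by fun_prop))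

lemma contPsi : Continuous Psi := by
  unfold Psi
  exact (((by fun_prop : Continuous (fun x : ℝ => -5*Real.pi/192 + Real.pi^3/16 + (-(Real.pi/3))*x + (3*Real.pi/4)*x^2 + 0*x^3 + (-(7*Real.pi/24))*x^4 + 0*x^5)).add
    ((by fun_prop : Continuous (fun x : ℝ => 5/96 - Real.pi^2/8 + (1/3)*x + (-(1/16))*x^2 + 0*x^3 + 0*x^4 + 0*x^5)).mul Real.continuous_arccos)).add
    ((by fun_prop : Continuous (fun x : ℝ => -(2/9) + (-(437/1440) + Real.pi^2/8)*x + (-(1/9))*x^2 + (103/180)*x^3 + 0*x^4 + (-(31/120))*x^5)).mul contSq))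

lemma polyD (c0 c1 c2 c3 c4 c5 x : ℝ) :
    HasDerivAt (fun y : ℝ => c0 + c1*y + c2*y^2 + c3*y^3 + c4*y^4 + c5*y^5)
      (c1 + 2*c2*x + 3*c3*x^2 + 4*c4*x^3 + 5*c5*x^4) x := by
  have H := ((((((hasDerivAt_pow 1 x).const_mul c1).add ((hasDerivAt_pow 2 x).const_mul c2)).add
    ((hasDerivAt_pow 3 x).const_mul c3)).add ((hasDerivAt_pow 4 x).const_mul c4)).add
    ((hasDerivAt_pow 5 x).const_mul c5)).const_add c0
  have e : (fun y : ℝ => c0 + c1*y + c2*y^2 + c3*y^3 + c4*y^4 + c5*y^5)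
      = (fun y : ℝ => c0 + ((((c1*y^1 + c2*y^2) + c3*y^3) + c4*y^4) + c5*y^5)) := by
    funext y; ring
  rw [e]
  refine H.congr_deriv (Eq.symm ?_)
  push_cast
  ring

lemma sqrtD {x : ℝ} (h1 : -1 < x) (h2 : x < 1) :
    HasDerivAt (fun y : ℝ => Real.sqrt (1 - y ^ 2)) (-x / Real.sqrt (1 - x ^ 2)) x := by
  have hne : (1 - x ^ 2) ≠ 0 := by nlinarith
  have hpos : 0 < Real.sqrt (1 - x ^ 2) := Real.sqrt_pos.2 (by nlinarith)
  have hin : HasDerivAt (fun y : ℝ => 1 - y ^ 2) (-(2*x)) x := by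
    have h := (hasDerivAt_pow 2 x).const_sub 1
    refine h.congr_deriv (Eq.symm ?_)
    push_cast
    ring
  have H := (Real.hasDerivAt_sqrt hne).comp x hin
  refine H.congr_deriv (Eq.symm ?_)
  field_simp

lemma phi_deriv (K X t : ℝ) (ht0 : -1 < t) (ht1 : t < 1) :
    HasDerivAt (Phi K X) ((K + X*t - (Real.arccos t - t*Real.sqrt (1 - t ^ 2))/2)^2) t := by
  have hq2 : Real.sqrt (1 - t ^ 2) ^ 2 = 1 - t ^ 2 := Real.sq_sqrt (by nlinarith)
  have hqpos : 0 < Real.sqrt (1 - t ^ 2) := Real.sqrt_pos.2 (by nlinarith)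
  have hq : Real.sqrt (1 - t ^ 2) ≠ 0 := hqpos.ne'
  have hc : Real.sqrt (1 - t ^ 2) * (Real.sqrt (1 - t ^ 2))⁻¹ = 1 := mul_inv_cancel₀ hq
  have hu : HasDerivAt Real.arccos (-(1 / Real.sqrt (1 - t ^ 2))) t :=
    Real.hasDerivAt_arccos (by linarith) (by linarith)
  have hqd : HasDerivAt (fun y : ℝ => Real.sqrt (1 - y ^ 2)) (-t / Real.sqrt (1 - t ^ 2)) t :=
    sqrtD ht0 ht1
  have H := ((((polyD (-(X*Real.pi)/16) (K^2 - 1/3) (K*X) (1/36 + X^2/3) 0 (-(1/20)) t).add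
      ((polyD (X/8) (-K) (-(X/2)) 0 0 0 t).mul hu)).add
      ((polyD 0 (1/4) 0 0 0 0 t).mul (hu.pow 2))).add
      ((polyD (2*K/3) (X/8) (K/3) (X/4) 0 0 t).mul hqd)).add
      (((polyD (-(1/3)) 0 (-(1/6)) 0 0 0 t).mul hu).mul hqd)
  have hS : ((-1/8)*X + (1/3)*t*K + (-1/6)*t*Real.arccos t + (3/8)*t^2*X + (-1/3)*t^3*K + (1/6)*t^3*Real.arccos t + (-1/4)*t^4*X)
      = ((K + X*t - (Real.arccos t - t*Real.sqrt (1 - t ^ 2))/2)^2 - ((-1/3) + (1)*K^2 + (1/8)*Real.sqrt (1 - t ^ 2)*X + (-1)*Real.arccos t*K + (1/4)*Real.arccos t^2 + (2)*t*K*X + (2/3)*t*Real.sqrt (1 - t ^ 2)*K + (-1)*t*Real.arccos t*X + (-1/3)*t*Real.arccos t*Real.sqrt (1 - t ^ 2) + (1/12)*t^2 + (1)*t^2*X^2 + (3/4)*t^2*Real.sqrt (1 - t ^ 2)*X + (-1/4)*t^4) + ((-1/3) + (-1/6)*t^2))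
        * Real.sqrt (1 - t ^ 2) := by
    linear_combination ((1/8)*X + (-1/3)*t*K + (1/6)*t*Real.arccos t + (-1/4)*t^2*X + (-1/4)*t^2*Real.sqrt (1 - t ^ 2)) * hq2
  show HasDerivAt _ _ t
  refine H.congr_deriv (Eq.symm ?_)
  simp only [Pi.mul_apply, Pi.pow_apply]
  linear_combination (((-1/3) + (1)*K^2 + (1/8)*Real.sqrt (1 - t ^ 2)*X + (-1)*Real.arccos t*K + (1/4)*Real.arccos t^2 + (2)*t*K*X + (2/3)*t*Real.sqrt (1 - t ^ 2)*K + (-1)*t*Real.arccos t*X + (-1/3)*t*Real.arccos t*Real.sqrt (1 - t ^ 2) + (1/12)*t^2 + (1)*t^2*X^2 + (3/4)*t^2*Real.sqrt (1 - t ^ 2)*X + (-1/4)*t^4) - (K + X*t - (Real.arccos t - t*Real.sqrt (1 - t ^ 2))/2)^2) * hc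
    - (Real.sqrt (1 - t ^ 2))⁻¹ * hS

lemma psi_deriv (x : ℝ) (h0 : 0 < x) (h1 : x < 1) : HasDerivAt Psi (Eo x) x := by
  have hq2 : Real.sqrt (1 - x ^ 2) ^ 2 = 1 - x ^ 2 := Real.sq_sqrt (by nlinarith)
  have hqpos : 0 < Real.sqrt (1 - x ^ 2) := Real.sqrt_pos.2 (by nlinarith)
  have hq : Real.sqrt (1 - x ^ 2) ≠ 0 := hqpos.ne'
  have hc : Real.sqrt (1 - x ^ 2) * (Real.sqrt (1 - x ^ 2))⁻¹ = 1 := mul_inv_cancel₀ hq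
  have hu : HasDerivAt Real.arccos (-(1 / Real.sqrt (1 - x ^ 2))) x :=
    Real.hasDerivAt_arccos (by linarith) (by linarith)
  have hqd : HasDerivAt (fun y : ℝ => Real.sqrt (1 - y ^ 2)) (-x / Real.sqrt (1 - x ^ 2)) x :=
    sqrtD (by linarith) h1
  have H := ((polyD (-5*Real.pi/192 + Real.pi^3/16) (-(Real.pi/3)) (3*Real.pi/4) 0 (-(7*Real.pi/24)) 0 x).add
      ((polyD (5/96 - Real.pi^2/8) (1/3) (-(1/16)) 0 0 0 x).mul hu)).add
      ((polyD (-(2/9)) (-(437/1440) + Real.pi^2/8) (-(1/9)) (103/180) 0 (-(31/120)) x).mul hqd)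
  have hS : ((-5/96) + (1/8)*Real.pi^2 + (-1/9)*x + (527/1440)*x^2 + (-1/8)*x^2*Real.pi^2 + (1/9)*x^3 + (-103/180)*x^4 + (31/120)*x^6) = (((-1/3)*Real.pi + (-16/45)*Real.sqrt (1 - x ^ 2) + (1/4)*Real.sqrt (1 - x ^ 2)*Real.pi^2 + (1/3)*Real.arccos x + (3/2)*x*Real.pi + (-1/3)*x*Real.sqrt (1 - x ^ 2) + (-1/8)*x*Real.arccos x + (731/360)*x^2*Real.sqrt (1 - x ^ 2) + (-7/6)*x^3*Real.pi + (-31/20)*x^4*Real.sqrt (1 - x ^ 2)) - ((-1/3)*Real.pi + (-437/1440)*Real.sqrt (1 - x ^ 2) + (1/8)*Real.sqrt (1 - x ^ 2)*Real.pi^2 + (1/3)*Real.arccos x + (3/2)*x*Real.pi + (-2/9)*x*Real.sqrt (1 - x ^ 2) + (-1/8)*x*Real.arccos x + (103/60)*x^2*Real.sqrt (1 - x ^ 2) + (-7/6)*x^3*Real.pi + (-31/24)*x^4*Real.sqrt (1 - x ^ 2))) * Real.sqrt (1 - x ^ 2) := by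
    linear_combination ((5/96) + (-1/8)*Real.pi^2 + (1/9)*x + (-113/360)*x^2 + (31/120)*x^4) * hq2
  show HasDerivAt _ _ x
  refine H.congr_deriv (Eq.symm ?_)
  simp only [Eo]
  linear_combination (((-1/3)*Real.pi + (-437/1440)*Real.sqrt (1 - x ^ 2) + (1/8)*Real.sqrt (1 - x ^ 2)*Real.pi^2 + (1/3)*Real.arccos x + (3/2)*x*Real.pi + (-2/9)*x*Real.sqrt (1 - x ^ 2) + (-1/8)*x*Real.arccos x + (103/60)*x^2*Real.sqrt (1 - x ^ 2) + (-7/6)*x^3*Real.pi + (-31/24)*x^4*Real.sqrt (1 - x ^ 2)) - ((-1/3)*Real.pi + (-16/45)*Real.sqrt (1 - x ^ 2) + (1/4)*Real.sqrt (1 - x ^ 2)*Real.pi^2 + (1/3)*Real.arccos x + (3/2)*x*Real.pi + (-1/3)*x*Real.sqrt (1 - x ^ 2) + (-1/8)*x*Real.arccos x + (731/360)*x^2*Real.sqrt (1 - x ^ 2) + (-7/6)*x^3*Real.pi + (-31/20)*x^4*Real.sqrt (1 - x ^ 2))) * hc - (Real.sqrt (1 - x ^ 2))⁻¹ * hS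

lemma inner_eq (x₁ : ℝ) (h0 : 0 < x₁) (h1 : x₁ < 1) :
    (∫ x₂ in (0:ℝ)..Real.sqrt (1 - x₁ ^ 2),
      (3 * Real.pi / 4 + x₁ * x₂ -
        ((Real.arccos x₁ - x₁ * Real.sqrt (1 - x₁ ^ 2)) +
         (Real.arccos x₂ - x₂ * Real.sqrt (1 - x₂ ^ 2))) / 2) ^ 2) = Eo x₁ := by
  set a1 := Real.arccos x₁ with ha1def
  set s1 := Real.sqrt (1 - x₁ ^ 2) with hs1def
  have hs1nn : 0 ≤ s1 := Real.sqrt_nonneg _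
  have hs2 : s1 ^ 2 = 1 - x₁ ^ 2 := Real.sq_sqrt (by nlinarith)
  have hs1lt : s1 < 1 := by nlinarith
  have hderiv : ∀ t ∈ Set.uIcc (0:ℝ) s1,
      HasDerivAt (Phi (3*Real.pi/4 - (a1 - x₁*s1)/2) x₁)
        ((3 * Real.pi / 4 + x₁ * t -
          ((a1 - x₁ * s1) + (Real.arccos t - t * Real.sqrt (1 - t ^ 2))) / 2) ^ 2) t := by
    intro t ht
    rw [Set.uIcc_of_le hs1nn] at ht
    have h3 := phi_deriv (3*Real.pi/4 - (a1 - x₁*s1)/2) x₁ t (by linarith [ht.1]) (by linarith [ht.2])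
    convert h3 using 1
    ring
  have hint : IntervalIntegrable (fun t : ℝ =>
      (3 * Real.pi / 4 + x₁ * t -
        ((a1 - x₁ * s1) + (Real.arccos t - t * Real.sqrt (1 - t ^ 2))) / 2) ^ 2)
      MeasureTheory.volume 0 s1 := by
    apply Continuous.intervalIntegrable
    apply Continuous.pow
    apply Continuous.sub
    · fun_prop
    · apply Continuous.div_const
      apply Continuous.add
      · exact continuous_const
      · exact Real.continuous_arccos.sub (continuous_id.mul contSq)
  rw [intervalIntegral.integral_eq_sub_of_hasDerivAt hderiv hint]
  have e1 : Real.arccos s1 = Real.pi/2 - a1 := by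
    apply Real.arccos_eq_of_eq_cos
    · have h := Real.arccos_le_pi_div_two.2 h0.le
      rw [← ha1def] at h
      linarith
    · have h := Real.arccos_nonneg x₁
      rw [← ha1def] at h
      have := Real.pi_pos
      linarith
    · rw [Real.cos_pi_div_two_sub, ha1def, Real.sin_arccos, hs1def]
  have e2 : Real.sqrt (1 - s1 ^ 2) = x₁ := by
    rw [hs2]
    rw [show (1:ℝ) - (1 - x₁ ^ 2) = x₁ ^ 2 by ring, Real.sqrt_sq h0.le]
  have e3 : Real.sqrt (1 - (0:ℝ) ^ 2) = 1 := by
    rw [show (1:ℝ) - (0:ℝ) ^ 2 = 1 by norm_num, Real.sqrt_one]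
  simp only [Phi, Eo, e1, e2, e3, Real.arccos_zero]
  linear_combination ((-1/45)*s1 + (-1/20)*s1^3 + (7/6)*x₁*Real.pi + (31/20)*x₁^2*s1) * hs2

set_option maxHeartbeats 1000000 in
theorem T3_value
    (g : ℝ → ℝ) (hg : ∀ x, g x = Real.arccos x - x * Real.sqrt (1 - x ^ 2)) :
    ∫ x₁ in (0:ℝ)..1, ∫ x₂ in (0:ℝ)..(Real.sqrt (1 - x₁ ^ 2)),
        (3 * Real.pi / 4 + x₁ * x₂ - (g x₁ + g x₂) / 2) ^ 2 =
      Real.pi ^ 3 / 16 + 19 * Real.pi / 192 + 2 / 9 := by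
  simp only [hg]
  have h1 : ∀ᵐ (x:ℝ) ∂MeasureTheory.volume, x ≠ 1 := by
    rw [MeasureTheory.ae_iff]
    have h : {x : ℝ | ¬ x ≠ 1} = {(1:ℝ)} := by ext y; simp
    rw [h]
    exact Real.volume_singleton
  have hcong : (∫ x₁ in (0:ℝ)..1, ∫ x₂ in (0:ℝ)..(Real.sqrt (1 - x₁ ^ 2)),
        (3 * Real.pi / 4 + x₁ * x₂ -
          ((Real.arccos x₁ - x₁ * Real.sqrt (1 - x₁ ^ 2)) +
           (Real.arccos x₂ - x₂ * Real.sqrt (1 - x₂ ^ 2))) / 2) ^ 2)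
      = ∫ x₁ in (0:ℝ)..1, Eo x₁ := by
    apply intervalIntegral.integral_congr_ae
    filter_upwards [h1] with x hx hmem
    rw [Set.uIoc_of_le (by norm_num : (0:ℝ) ≤ 1)] at hmem
    exact inner_eq x hmem.1 (lt_of_le_of_ne hmem.2 hx)
  rw [hcong]
  have hcont : ContinuousOn Psi (Set.Icc 0 1) := contPsi.continuousOn
  have hderiv2 : ∀ x ∈ Set.Ioo (0:ℝ) 1, HasDerivWithinAt Psi (Eo x) (Set.Ioi x) x :=
    fun x hx => (psi_deriv x hx.1 hx.2).hasDerivWithinAt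
  have hint2 : IntervalIntegrable Eo MeasureTheory.volume 0 1 :=
    contEo.intervalIntegrable 0 1
  rw [intervalIntegral.integral_eq_sub_of_hasDeriv_right_of_le (by norm_num) hcont hderiv2 hint2]
  have e3 : Real.sqrt (1 - (0:ℝ) ^ 2) = 1 := by
    rw [show (1:ℝ) - (0:ℝ) ^ 2 = 1 by norm_num, Real.sqrt_one]
  have e4 : Real.sqrt (1 - (1:ℝ) ^ 2) = 0 := by
    rw [show (1:ℝ) - (1:ℝ) ^ 2 = 0 by norm_num, Real.sqrt_zero]
  simp only [Psi, Real.arccos_one, Real.arccos_zero, e3, e4]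
  ring
end

section
/- Let n > 0 and 0 < r < n/2. If U and V are independent uniform random points in the square [0,n]², then P(dist(U,V) ≤ r) = πr²/n² - 8r³/(3n³) + r⁴/(2n⁴). -/
open MeasureTheory Set intervalIntegral Real ENNReal

lemma abs_even_int (r : ℝ) (hr : 0 ≤ r) (h : ℝ → ℝ) (hh : Continuous h) (he : ∀ x, h (-x) = h x) :
    ∫ u in (-r)..r, |u| * h u = 2 * ∫ u in (0:ℝ)..r, u * h u := by
  have h1 : ∫ u in (-r)..(0:ℝ), |u| * h u = ∫ u in (0:ℝ)..r, |u| * h u := by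
    have := intervalIntegral.integral_comp_neg (a := (0:ℝ)) (b := r) (fun u => |u| * h u)
    simp only [abs_neg, he, neg_zero] at this
    exact this.symm
  have h2 := intervalIntegral.integral_add_adjacent_intervals
    (a := -r) (b := 0) (c := r) (f := fun u => |u| * h u)
    (((continuous_abs.mul hh)).intervalIntegrable (μ := volume) _ _)
    (((continuous_abs.mul hh)).intervalIntegrable (μ := volume) _ _)
  have h3 : ∫ u in (0:ℝ)..r, |u| * h u = ∫ u in (0:ℝ)..r, u * h u := by
    apply intervalIntegral.integral_congr
    intro x hx
    rw [uIcc_of_le hr] at hx; simp only []; rw [abs_of_nonneg hx.1]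
  rw [← h2, h1, h3]; ring

lemma int_sqrt (r : ℝ) (hr : 0 < r) :
    ∫ u in (-r)..r, Real.sqrt (r^2 - u^2) = π * r^2 / 2 := by
  have key : ∀ u : ℝ, Real.sqrt (r^2 - u^2) = r * Real.sqrt (1 - (u/r)^2) := by
    intro u
    rw [show r^2 - u^2 = r^2 * (1 - (u/r)^2) by field_simp, Real.sqrt_mul (sq_nonneg r),
      Real.sqrt_sq hr.le]
  simp only [key]
  rw [intervalIntegral.integral_const_mul]
  have := intervalIntegral.integral_comp_div (a := -r) (b := r) (c := r)
    (f := fun x => Real.sqrt (1 - x^2)) (ne_of_gt hr)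
  rw [this, neg_div, div_self (ne_of_gt hr), integral_sqrt_one_sub_sq]
  simp [smul_eq_mul]; ring

lemma int_u_sqrt (r : ℝ) (hr : 0 < r) :
    ∫ u in (0:ℝ)..r, u * Real.sqrt (r^2 - u^2) = r^3 / 3 := by
  have h := intervalIntegral.integral_eq_sub_of_hasDeriv_right_of_le (a := 0) (b := r)
    (f := fun u => -(1/3) * ((r^2 - u^2) * Real.sqrt (r^2 - u^2)))
    (f' := fun u => u * Real.sqrt (r^2 - u^2)) hr.le
    (by
      apply ContinuousOn.mul continuousOn_const
      exact ((continuous_const.sub (continuous_pow 2)).mul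
        ((continuous_const.sub (continuous_pow 2)).sqrt)).continuousOn)
    (by
      intro x hx
      have hg : HasDerivAt (fun u : ℝ => r^2 - u^2) (-(2*x)) x := by
        simpa using ((hasDerivAt_pow 2 x).const_sub (r^2))
      have hgpos : 0 < r^2 - x^2 := by nlinarith [hx.1, hx.2]
      have hs : HasDerivAt (fun u : ℝ => Real.sqrt (r^2 - u^2))
          (1/(2 * Real.sqrt (r^2 - x^2)) * (-(2*x))) x :=
        (Real.hasDerivAt_sqrt (ne_of_gt hgpos)).comp x hg
      have hmul := (hg.mul hs).const_mul (-(1/3 : ℝ))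
      have heq : -(1/3 : ℝ) * ((-(2*x)) * Real.sqrt (r^2 - x^2) +
          (r^2 - x^2) * (1/(2 * Real.sqrt (r^2 - x^2)) * (-(2*x))))
          = x * Real.sqrt (r^2 - x^2) := by
        have hsq : Real.sqrt (r^2 - x^2) ≠ 0 := by positivity
        have : (r^2 - x^2) / Real.sqrt (r^2 - x^2) = Real.sqrt (r^2 - x^2) :=
          Real.div_sqrt
        have hss : Real.sqrt (r^2-x^2) * Real.sqrt (r^2-x^2) = r^2 - x^2 :=
          Real.mul_self_sqrt hgpos.le
        field_simp
        rw [Real.sq_sqrt hgpos.le]; ring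
      rw [heq] at hmul
      exact hmul.hasDerivWithinAt
      )
    (by
      apply Continuous.intervalIntegrable
      exact continuous_id.mul ((continuous_const.sub (continuous_pow 2)).sqrt))
  rw [h]
  norm_num [Real.sqrt_sq hr.le]
  ring

lemma int_r2u2 (r : ℝ) : ∫ u in (-r)..r, (r^2 - u^2) = 4 * r^3 / 3 := by
  rw [intervalIntegral.integral_sub intervalIntegrable_const
    ((continuous_pow 2).intervalIntegrable (μ := volume) _ _)]
  simp [integral_pow]
  ring

lemma int_u_r2u2 (r : ℝ) (hr : 0 < r) :
    ∫ u in (0:ℝ)..r, u * (r^2 - u^2) = r^4 / 4 := by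
  have : ∀ u : ℝ, u * (r^2 - u^2) = r^2 * u - u^3 := by intro u; ring
  simp only [this]
  rw [intervalIntegral.integral_sub (f := fun u => r^2 * u) (g := fun u => u^3)
    ((continuous_const.mul continuous_id').intervalIntegrable (μ := volume) _ _)
    ((continuous_pow 3).intervalIntegrable (μ := volume) _ _)]
  rw [intervalIntegral.integral_const_mul, integral_id]
  simp [integral_pow]
  ring

lemma int_band (n s : ℝ) (hs : 0 ≤ s) :
    ∫ v in (-s)..s, (n - |v|) = 2*n*s - s^2 := by
  rw [intervalIntegral.integral_sub intervalIntegrable_const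
    (continuous_abs.intervalIntegrable (μ := volume) _ _)]
  have : ∫ v in (-s)..s, |v| = 2 * ∫ v in (0:ℝ)..s, v * 1 := by
    have := abs_even_int s hs (fun _ => 1) continuous_const (fun _ => rfl)
    simpa using this
  rw [this]
  simp [integral_id]
  ring

lemma int_main (n r : ℝ) (hr : 0 < r) :
    ∫ u in (-r)..r, (n - |u|) * (2*n*Real.sqrt (r^2-u^2) - (r^2-u^2))
      = π * n^2 * r^2 - 8*n*r^3/3 + r^4/2 := by
  have csq : Continuous fun u : ℝ => Real.sqrt (r^2-u^2) :=
    (continuous_const.sub (continuous_pow 2)).sqrt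
  have cpoly : Continuous fun u : ℝ => r^2-u^2 := continuous_const.sub (continuous_pow 2)
  have habs1 : ∫ u in (-r)..r, |u| * Real.sqrt (r^2-u^2) = 2*(r^3/3) := by
    rw [abs_even_int r hr.le _ csq (by intro x; rw [neg_pow]; norm_num), int_u_sqrt r hr]
  have habs2 : ∫ u in (-r)..r, |u| * (r^2-u^2) = 2*(r^4/4) := by
    rw [abs_even_int r hr.le _ cpoly (by intro x; rw [neg_pow]; norm_num), int_u_r2u2 r hr]
  have e1 : ∀ u : ℝ, (n - |u|) * (2*n*Real.sqrt (r^2-u^2) - (r^2-u^2))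
      = (2*n^2) * Real.sqrt (r^2-u^2) - n*(r^2-u^2) - (2*n)*(|u| * Real.sqrt (r^2-u^2))
        + |u| * (r^2-u^2) := by intro u; ring
  simp only [e1]
  rw [intervalIntegral.integral_add
      (f := fun u => 2*n^2*Real.sqrt (r^2-u^2) - n*(r^2-u^2) - 2*n*(|u| * Real.sqrt (r^2-u^2)))
      (g := fun u => |u| * (r^2-u^2))
      ((((continuous_const.mul csq).sub (continuous_const.mul cpoly)).sub
        (continuous_const.mul (continuous_abs.mul csq))).intervalIntegrable (μ := volume) _ _)
      ((continuous_abs.mul cpoly).intervalIntegrable (μ := volume) _ _),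
    intervalIntegral.integral_sub
      (f := fun u => 2*n^2*Real.sqrt (r^2-u^2) - n*(r^2-u^2))
      (g := fun u => 2*n*(|u| * Real.sqrt (r^2-u^2)))
      (((continuous_const.mul csq).sub (continuous_const.mul cpoly)).intervalIntegrable _ _)
      ((continuous_const.mul (continuous_abs.mul csq)).intervalIntegrable _ _),
    intervalIntegral.integral_sub
      (f := fun u => 2*n^2*Real.sqrt (r^2-u^2)) (g := fun u => n*(r^2-u^2))
      ((continuous_const.mul csq).intervalIntegrable _ _)
      ((continuous_const.mul cpoly).intervalIntegrable _ _),
    intervalIntegral.integral_const_mul, intervalIntegral.integral_const_mul,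
    intervalIntegral.integral_const_mul, int_sqrt r hr, int_r2u2 r, habs1, habs2]
  ring



lemma min_max_eq (n c : ℝ) : min n (n + c) - max 0 c = n - |c| := by
  rcases abs_cases c with ⟨h1, h2⟩ | ⟨h1, h2⟩
  · rw [min_eq_left (by linarith), max_eq_right h2, h1]
  · rw [min_eq_right (by linarith), max_eq_left (by linarith), h1]; ring

lemma overlap (n : ℝ) (c : ℝ × ℝ) :
    volume ((Icc (0:ℝ) n ×ˢ Icc (0:ℝ) n) ∩ {a : ℝ × ℝ | a - c ∈ Icc (0:ℝ) n ×ˢ Icc (0:ℝ) n})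
      = ENNReal.ofReal (n - |c.1|) * ENNReal.ofReal (n - |c.2|) := by
  have hset : (Icc (0:ℝ) n ×ˢ Icc (0:ℝ) n) ∩ {a : ℝ × ℝ | a - c ∈ Icc (0:ℝ) n ×ˢ Icc (0:ℝ) n}
      = (Icc (0:ℝ) n ∩ Icc c.1 (n + c.1)) ×ˢ (Icc (0:ℝ) n ∩ Icc c.2 (n + c.2)) := by
    ext ⟨x, y⟩
    simp only [Set.mem_inter_iff, Set.mem_prod, Set.mem_Icc, Set.mem_setOf_eq, Prod.fst_sub,
      Prod.snd_sub]
    constructor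
    · rintro ⟨⟨⟨a1, a2⟩, b1, b2⟩, ⟨c1, c2⟩, d1, d2⟩
      refine ⟨⟨⟨a1, a2⟩, by constructor <;> linarith⟩, ⟨b1, b2⟩, by constructor <;> linarith⟩
    · rintro ⟨⟨⟨a1, a2⟩, a3, a4⟩, ⟨b1, b2⟩, b3, b4⟩
      refine ⟨⟨⟨a1, a2⟩, b1, b2⟩, ⟨by constructor <;> linarith, by constructor <;> linarith⟩⟩
  rw [hset, Measure.volume_eq_prod, Measure.prod_prod, Set.Icc_inter_Icc, Set.Icc_inter_Icc,
    Real.volume_Icc, Real.volume_Icc, min_max_eq, min_max_eq]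

lemma conv2 (n : ℝ) (f : ℝ × ℝ → ℝ≥0∞) (hf : Measurable f) :
    ∫⁻ a in (Icc (0:ℝ) n ×ˢ Icc (0:ℝ) n), ∫⁻ b in (Icc (0:ℝ) n ×ˢ Icc (0:ℝ) n), f (a - b)
      = ∫⁻ c, f c * (ENNReal.ofReal (n - |c.1|) * ENNReal.ofReal (n - |c.2|)) := by
  set Q : Set (ℝ × ℝ) := Icc (0:ℝ) n ×ˢ Icc (0:ℝ) n with hQdef
  have hQ : MeasurableSet Q := (measurableSet_Icc).prod measurableSet_Icc
  set iQ : (ℝ × ℝ) → ℝ≥0∞ := Q.indicator 1 with hiQ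
  have hiQm : Measurable iQ := (measurable_const.indicator hQ)
  have step1 : ∫⁻ a in Q, ∫⁻ b in Q, f (a - b)
      = ∫⁻ a, ∫⁻ b, f (a - b) * (iQ a * iQ b) := by
    rw [← lintegral_indicator hQ]
    congr 1
    funext a
    by_cases ha : a ∈ Q
    · rw [Set.indicator_of_mem ha, ← lintegral_indicator hQ]
      congr 1; funext b
      by_cases hb : b ∈ Q
      · rw [Set.indicator_of_mem hb, hiQ, Set.indicator_of_mem ha, Set.indicator_of_mem hb]
        simp
      · rw [Set.indicator_of_notMem hb, hiQ, Set.indicator_of_notMem hb]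
        simp
    · rw [Set.indicator_of_notMem ha]
      symm
      simp only [hiQ, Set.indicator_of_notMem ha]
      simp
  rw [step1]
  have step2 : ∀ a : ℝ × ℝ, ∫⁻ b, f (a - b) * (iQ a * iQ b)
      = ∫⁻ c, f c * (iQ a * iQ (a - c)) := by
    intro a
    have hmp : MeasurePreserving (fun c : ℝ × ℝ => a - c) volume volume :=
      Measure.measurePreserving_sub_left volume a
    have hm : Measurable (fun c : ℝ × ℝ => f c * (iQ a * iQ (a - c))) :=
      hf.mul (measurable_const.mul (hiQm.comp (measurable_const.sub measurable_id)))
    have := hmp.lintegral_comp hm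
    simp only [_root_.sub_sub_cancel] at this
    exact this
  simp only [step2]
  rw [lintegral_lintegral_swap]
  · apply lintegral_congr
    intro c
    have hg : Measurable fun a : ℝ × ℝ => iQ a * iQ (a - c) :=
      hiQm.mul (hiQm.comp (measurable_id.sub measurable_const))
    have e1 : ∀ a : ℝ × ℝ, f c * (iQ a * iQ (a - c)) = f c * (fun a => iQ a * iQ (a - c)) a :=
      fun a => rfl
    rw [lintegral_const_mul (f c) hg]
    congr 1
    have e2 : ∀ a : ℝ × ℝ, iQ a * iQ (a - c)
        = (Q ∩ {a : ℝ × ℝ | a - c ∈ Q}).indicator 1 a := by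
      intro a
      by_cases h1 : a ∈ Q <;> by_cases h2 : a - c ∈ Q <;>
        simp [hiQ, Set.indicator_apply, h1, h2, Set.mem_inter_iff, Set.mem_setOf_eq]
    simp only [e2]
    have hms : MeasurableSet {a : ℝ × ℝ | a - c ∈ Q} :=
      measurableSet_preimage (measurable_id.sub measurable_const) hQ
    rw [lintegral_indicator_one (hQ.inter hms)]
    exact overlap n c
  · exact ((hf.comp measurable_snd).mul ((hiQm.comp measurable_fst).mul
      (hiQm.comp (measurable_fst.sub measurable_snd)))).aemeasurable

section
variable (n r : ℝ)

lemma disc_meas : MeasurableSet {c : ℝ × ℝ | c.1^2 + c.2^2 ≤ r^2} :=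
  (isClosed_le (((continuous_fst.pow 2)).add ((continuous_snd.pow 2))) continuous_const).measurableSet

lemma disc_abs_le {c : ℝ × ℝ} (hr : 0 ≤ r) (hc : c ∈ {c : ℝ × ℝ | c.1^2 + c.2^2 ≤ r^2}) :
    |c.1| ≤ r ∧ |c.2| ≤ r := by
  simp only [Set.mem_setOf_eq] at hc
  constructor
  · rw [← Real.sqrt_sq_eq_abs, ← Real.sqrt_sq hr]
    exact Real.sqrt_le_sqrt (by nlinarith [sq_nonneg c.2])
  · rw [← Real.sqrt_sq_eq_abs, ← Real.sqrt_sq hr]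
    exact Real.sqrt_le_sqrt (by nlinarith [sq_nonneg c.1])

lemma disc_compact (hr : 0 ≤ r) : IsCompact {c : ℝ × ℝ | c.1^2 + c.2^2 ≤ r^2} := by
  apply IsCompact.of_isClosed_subset (isCompact_Icc (a := ((-r, -r) : ℝ × ℝ)) (b := (r, r)))
  · exact isClosed_le (((continuous_fst.pow 2)).add ((continuous_snd.pow 2))) continuous_const
  · intro c hc
    obtain ⟨h1, h2⟩ := disc_abs_le r hr hc
    rw [Set.mem_Icc]
    obtain ⟨a1, a2⟩ := abs_le.mp h1
    obtain ⟨b1, b2⟩ := abs_le.mp h2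
    exact ⟨⟨a1, b1⟩, a2, b2⟩

lemma F_integrable (hr : 0 ≤ r) :
    Integrable (({c : ℝ × ℝ | c.1^2 + c.2^2 ≤ r^2}).indicator
      (fun c => (n - |c.1|) * (n - |c.2|))) := by
  rw [integrable_indicator_iff (disc_meas r)]
  exact (((continuous_const.sub (continuous_abs.comp continuous_fst)).mul
    (continuous_const.sub (continuous_abs.comp continuous_snd))).continuousOn).integrableOn_compact
    (disc_compact r hr)

lemma volT (hr : 0 ≤ r) (hrn : r ≤ n) :
    volume {p : (ℝ × ℝ) × (ℝ × ℝ) | p.1 ∈ Icc (0:ℝ) n ×ˢ Icc (0:ℝ) n ∧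
        p.2 ∈ Icc (0:ℝ) n ×ˢ Icc (0:ℝ) n ∧ p.1 - p.2 ∈ {c : ℝ × ℝ | c.1^2 + c.2^2 ≤ r^2}}
      = ENNReal.ofReal (∫ c in {c : ℝ × ℝ | c.1^2 + c.2^2 ≤ r^2},
          (n - |c.1|) * (n - |c.2|)) := by
  set Q : Set (ℝ × ℝ) := Icc (0:ℝ) n ×ˢ Icc (0:ℝ) n with hQdef
  set disc : Set (ℝ × ℝ) := {c : ℝ × ℝ | c.1^2 + c.2^2 ≤ r^2} with hdiscdef
  have hQ : MeasurableSet Q := (measurableSet_Icc).prod measurableSet_Icc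
  have hdisc : MeasurableSet disc := disc_meas r
  set T : Set ((ℝ × ℝ) × (ℝ × ℝ)) := {p | p.1 ∈ Q ∧ p.2 ∈ Q ∧ p.1 - p.2 ∈ disc} with hTdef
  have hT : MeasurableSet T := by
    have : T = (Q ×ˢ Q) ∩ ((fun p : (ℝ × ℝ) × (ℝ × ℝ) => p.1 - p.2) ⁻¹' disc) := by
      ext p; simp [hTdef, Set.mem_prod, and_assoc]
    rw [this]
    exact (hQ.prod hQ).inter (hdisc.preimage (measurable_fst.sub measurable_snd))
  rw [Measure.volume_eq_prod, Measure.prod_apply hT]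
  have hsec : ∀ a : ℝ × ℝ, (volume : Measure (ℝ × ℝ)) (Prod.mk a ⁻¹' T)
      = Q.indicator (fun a => ∫⁻ b in Q, disc.indicator 1 (a - b)) a := by
    intro a
    by_cases ha : a ∈ Q
    · rw [Set.indicator_of_mem ha]
      have hpre : Prod.mk a ⁻¹' T = {b : ℝ × ℝ | a - b ∈ disc} ∩ Q := by
        ext b
        simp [hTdef, ha, and_comm]
      have hind : ∀ b : ℝ × ℝ, disc.indicator (1 : (ℝ × ℝ) → ℝ≥0∞) (a - b)
          = ({b : ℝ × ℝ | a - b ∈ disc}).indicator (1 : (ℝ × ℝ) → ℝ≥0∞) b := by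
        intro b
        by_cases hb : a - b ∈ disc <;>
          simp [Set.indicator_apply, hb]
      rw [hpre]
      simp only [hind]
      have hmA : MeasurableSet {b : ℝ × ℝ | a - b ∈ disc} :=
        measurableSet_preimage (measurable_const.sub measurable_id) hdisc
      rw [lintegral_indicator_one hmA, Measure.restrict_apply hmA]
    · rw [Set.indicator_of_notMem ha]
      have : Prod.mk a ⁻¹' T = ∅ := by
        ext b; simp [hTdef, ha]
      rw [this, measure_empty]
  rw [lintegral_congr hsec, lintegral_indicator hQ]
  rw [conv2 n (disc.indicator 1) (measurable_one.indicator hdisc)]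
  have hpt : ∀ c : ℝ × ℝ, disc.indicator 1 c *
      (ENNReal.ofReal (n - |c.1|) * ENNReal.ofReal (n - |c.2|))
      = ENNReal.ofReal (disc.indicator (fun c => (n - |c.1|) * (n - |c.2|)) c) := by
    intro c
    by_cases hc : c ∈ disc
    · obtain ⟨h1, h2⟩ := disc_abs_le r hr hc
      rw [Set.indicator_of_mem hc, Set.indicator_of_mem hc,
        ← ENNReal.ofReal_mul (by linarith)]
      simp
    · rw [Set.indicator_of_notMem hc, Set.indicator_of_notMem hc]
      simp
  rw [lintegral_congr hpt]
  rw [← ofReal_integral_eq_lintegral_ofReal (F_integrable n r hr)]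
  · rw [MeasureTheory.integral_indicator hdisc]
  · apply Filter.Eventually.of_forall
    intro c
    apply Set.indicator_nonneg
    intro x hx
    obtain ⟨h1, h2⟩ := disc_abs_le r hr hx
    have := mul_nonneg (by linarith : (0:ℝ) ≤ n - |x.1|) (by linarith : (0:ℝ) ≤ n - |x.2|)
    linarith
end


lemma Jcalc (n r : ℝ) (hr : 0 < r) :
    ∫ c in {c : ℝ × ℝ | c.1^2 + c.2^2 ≤ r^2}, (n - |c.1|) * (n - |c.2|)
      = π*n^2*r^2 - 8*n*r^3/3 + r^4/2 := by
  set disc : Set (ℝ × ℝ) := {c : ℝ × ℝ | c.1^2 + c.2^2 ≤ r^2} with hdiscdef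
  rw [← MeasureTheory.integral_indicator (disc_meas r)]
  rw [Measure.volume_eq_prod, integral_prod _ (F_integrable n r hr.le)]
  have hin : ∀ x : ℝ, (∫ y : ℝ, disc.indicator (fun c => (n - |c.1|) * (n - |c.2|)) (x, y))
      = (Icc (-r) r).indicator
          (fun x => (n - |x|) * (2*n*Real.sqrt (r^2-x^2) - (r^2-x^2))) x := by
    intro x
    by_cases hx : x^2 ≤ r^2
    · set s := Real.sqrt (r^2 - x^2) with hsdef
      have hs0 : (0:ℝ) ≤ s := Real.sqrt_nonneg _
      have hseq : s^2 = r^2 - x^2 := Real.sq_sqrt (by linarith)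
      have hind : ∀ y : ℝ, disc.indicator (fun c => (n - |c.1|) * (n - |c.2|)) (x, y)
          = (Icc (-s) s).indicator (fun y => (n - |x|) * (n - |y|)) y := by
        intro y
        have hmem : (x, y) ∈ disc ↔ y ∈ Icc (-s) s := by
          have hrfl : (x, y) ∈ disc ↔ x^2 + y^2 ≤ r^2 := Iff.rfl
          rw [hrfl, Set.mem_Icc, ← abs_le]
          constructor
          · intro h
            rw [← Real.sqrt_sq_eq_abs]
            exact Real.sqrt_le_sqrt (by linarith)
          · intro h
            have h2 := pow_le_pow_left₀ (abs_nonneg y) h 2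
            nlinarith [sq_abs y, hseq]
        by_cases h : (x, y) ∈ disc
        · rw [Set.indicator_of_mem h, Set.indicator_of_mem (hmem.mp h)]
        · rw [Set.indicator_of_notMem h, Set.indicator_of_notMem (fun hh => h (hmem.mpr hh))]
      simp only [hind]
      rw [MeasureTheory.integral_indicator measurableSet_Icc, integral_Icc_eq_integral_Ioc,
        ← intervalIntegral.integral_of_le (by linarith : -s ≤ s),
        intervalIntegral.integral_const_mul, int_band n s hs0]
      have hxr : |x| ≤ r := by
        rw [← Real.sqrt_sq_eq_abs, ← Real.sqrt_sq hr.le]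
        exact Real.sqrt_le_sqrt hx
      rw [Set.indicator_of_mem (by rw [Set.mem_Icc, ← abs_le]; exact hxr), hseq]
    · have hz : ∀ y : ℝ, disc.indicator (fun c => (n - |c.1|) * (n - |c.2|)) (x, y) = 0 := by
        intro y
        apply Set.indicator_of_notMem
        show ¬ (x^2 + y^2 ≤ r^2)
        push_neg
        nlinarith [sq_nonneg y]
      simp only [hz, MeasureTheory.integral_zero]
      symm
      apply Set.indicator_of_notMem
      rw [Set.mem_Icc, ← abs_le]
      intro hh
      have : x^2 ≤ r^2 := by nlinarith [sq_abs x, abs_nonneg x]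
      exact hx this
  simp only [← hdiscdef, hin]
  rw [MeasureTheory.integral_indicator measurableSet_Icc, integral_Icc_eq_integral_Ioc,
    ← intervalIntegral.integral_of_le (by linarith : -r ≤ r), int_main n r hr]


theorem prob_dist_le_r (n r : ℝ) (hn : 0 < n) (hr : 0 < r) (hrn : r < n / 2) :
    (volume {p : (EuclideanSpace ℝ (Fin 2)) × (EuclideanSpace ℝ (Fin 2)) |
        (∀ i, p.1 i ∈ Set.Icc (0:ℝ) n) ∧ (∀ i, p.2 i ∈ Set.Icc (0:ℝ) n) ∧
        dist p.1 p.2 ≤ r}).toReal / n ^ 4 =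
      Real.pi * r ^ 2 / n ^ 2 - 8 * r ^ 3 / (3 * n ^ 3) + r ^ 4 / (2 * n ^ 4) := by
  have hrn' : r ≤ n := by linarith
  set Q : Set (ℝ × ℝ) := Icc (0:ℝ) n ×ˢ Icc (0:ℝ) n with hQdef
  set disc : Set (ℝ × ℝ) := {c : ℝ × ℝ | c.1^2 + c.2^2 ≤ r^2} with hdiscdef
  have hQ : MeasurableSet Q := (measurableSet_Icc).prod measurableSet_Icc
  have hdisc : MeasurableSet disc := disc_meas r
  set T : Set ((ℝ × ℝ) × (ℝ × ℝ)) := {p | p.1 ∈ Q ∧ p.2 ∈ Q ∧ p.1 - p.2 ∈ disc} with hTdef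
  have hT : MeasurableSet T := by
    have : T = (Q ×ˢ Q) ∩ ((fun p : (ℝ × ℝ) × (ℝ × ℝ) => p.1 - p.2) ⁻¹' disc) := by
      ext p; simp [hTdef, Set.mem_prod, and_assoc]
    rw [this]
    exact (hQ.prod hQ).inter (hdisc.preimage (measurable_fst.sub measurable_snd))
  set φ : EuclideanSpace ℝ (Fin 2) ≃ᵐ ℝ × ℝ :=
    (MeasurableEquiv.toLp 2 (Fin 2 → ℝ)).symm.trans (MeasurableEquiv.finTwoArrow) with hφdef
  have hφ : MeasurePreserving φ volume volume :=
    (volume_preserving_finTwoArrow ℝ).comp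
      (EuclideanSpace.volume_preserving_symm_measurableEquiv_toLp (Fin 2))
  have hΦ : MeasurePreserving (Prod.map φ φ) volume volume := hφ.prod hφ
  have hφapp : ∀ x : EuclideanSpace ℝ (Fin 2), φ x = (x 0, x 1) := fun x => rfl
  have hSeq : {p : (EuclideanSpace ℝ (Fin 2)) × (EuclideanSpace ℝ (Fin 2)) |
        (∀ i, p.1 i ∈ Set.Icc (0:ℝ) n) ∧ (∀ i, p.2 i ∈ Set.Icc (0:ℝ) n) ∧
        dist p.1 p.2 ≤ r} = (Prod.map φ φ) ⁻¹' T := by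
    ext p
    simp only [Set.mem_setOf_eq, Set.mem_preimage]
    rw [show Prod.map (⇑φ) (⇑φ) p = ((p.1 0, p.1 1), (p.2 0, p.2 1)) from rfl]
    simp only [hTdef, Set.mem_setOf_eq, hQdef, Set.mem_prod, Set.mem_Icc]
    have hdist : dist p.1 p.2 ≤ r ↔ (p.1 0 - p.2 0)^2 + (p.1 1 - p.2 1)^2 ≤ r^2 := by
      rw [EuclideanSpace.dist_eq, Fin.sum_univ_two, Real.dist_eq, Real.dist_eq,
        sq_abs, sq_abs]
      rw [show r = Real.sqrt (r^2) by rw [Real.sqrt_sq hr.le]]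
      rw [Real.sqrt_le_sqrt_iff (sq_nonneg r)]
      rw [Real.sqrt_sq hr.le]
    have hmemdisc : ((p.1 0, p.1 1) - (p.2 0, p.2 1) : ℝ × ℝ) ∈ disc
        ↔ (p.1 0 - p.2 0)^2 + (p.1 1 - p.2 1)^2 ≤ r^2 := Iff.rfl
    rw [hmemdisc, ← hdist, Fin.forall_fin_two, Fin.forall_fin_two]
  rw [hSeq, hΦ.measure_preimage hT.nullMeasurableSet, volT n r hr.le hrn', Jcalc n r hr]
  have h0 : (0:ℝ) ≤ π*n^2*r^2 - 8*n*r^3/3 + r^4/2 := by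
    have hA : 8*n*r^3/3 ≤ (4:ℝ)/3*n^2*r^2 := by
      nlinarith [mul_le_mul_of_nonneg_left hrn.le (show (0:ℝ) ≤ 8*n*r^2/3 by positivity)]
    have hB : 3*(n^2*r^2) ≤ π*(n^2*r^2) :=
      mul_le_mul_of_nonneg_right Real.pi_gt_three.le (by positivity)
    nlinarith [sq_nonneg (r^2)]
  rw [ENNReal.toReal_ofReal h0]
  field_simp
end

section
/- Let 0 < r and A = [0,n]² with n > 2r. If ξ ∈ A is at distance x₁·r from one edge of A (with 0 ≤ x₁ ≤ 1) and at distance greater than r from the other three edges, then the area of B(ξ,r) ∩ A equals r²·(π - g(x₁)), where g(x) = arccos(x) - x√(1-x²). -/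
open MeasureTheory Set

lemma aux_integral (a r c : ℝ) (hr : 0 < r) (hc : a - r ≤ c) (hc' : c ≤ a + r) :
    ∫ x in (a - r)..c, 2 * Real.sqrt (r ^ 2 - (x - a) ^ 2)
      = r ^ 2 * Real.arcsin ((c - a) / r) + (c - a) * Real.sqrt (r ^ 2 - (c - a) ^ 2)
        + r ^ 2 * (Real.pi / 2) := by
  set H : ℝ → ℝ := fun x => r ^ 2 * Real.arcsin ((x - a) / r)
    + (x - a) * Real.sqrt (r ^ 2 - (x - a) ^ 2) with hH
  have hcontH : ContinuousOn H (Icc (a - r) c) := by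
    apply Continuous.continuousOn
    apply Continuous.add
    · exact continuous_const.mul (Real.continuous_arcsin.comp
        ((continuous_id.sub continuous_const).div_const r))
    · exact (continuous_id.sub continuous_const).mul
        ((continuous_const.sub ((continuous_id.sub continuous_const).pow 2)).sqrt)
  have hderiv : ∀ x ∈ Ioo (a - r) c,
      HasDerivAt H (2 * Real.sqrt (r ^ 2 - (x - a) ^ 2)) x := by
    intro x hx
    have hx1 : a - r < x := hx.1
    have hx2 : x < a + r := lt_of_lt_of_le hx.2 hc'
    have hv : 0 < r ^ 2 - (x - a) ^ 2 := by nlinarith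
    set v := r ^ 2 - (x - a) ^ 2 with hvdef
    have hsv : 0 < Real.sqrt v := Real.sqrt_pos.2 hv
    have hsq : Real.sqrt v ^ 2 = v := Real.sq_sqrt hv.le
    have hu : HasDerivAt (fun x : ℝ => (x - a) / r) (1 / r) x := by
      simpa using ((hasDerivAt_id x).sub_const a).div_const r
    have hune1 : (x - a) / r ≠ -1 := by
      intro h
      have : x - a = -r := by field_simp at h; linarith
      nlinarith
    have hune2 : (x - a) / r ≠ 1 := by
      intro h
      have : x - a = r := by field_simp at h; linarith
      nlinarith
    have h1 : HasDerivAt (fun x : ℝ => Real.arcsin ((x - a) / r))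
        (1 / Real.sqrt (1 - ((x - a) / r) ^ 2) * (1 / r)) x :=
      HasDerivAt.comp (h₂ := Real.arcsin) x (Real.hasDerivAt_arcsin hune1 hune2) hu
    have hvv : HasDerivAt (fun x : ℝ => r ^ 2 - (x - a) ^ 2) (-(2 * (x - a))) x := by
      have := (((hasDerivAt_id x).sub_const a).pow 2).const_sub (r ^ 2)
      simpa using this
    have h3 : HasDerivAt (fun x : ℝ => Real.sqrt (r ^ 2 - (x - a) ^ 2))
        (1 / (2 * Real.sqrt v) * (-(2 * (x - a)))) x :=
      (Real.hasDerivAt_sqrt hv.ne').comp x hvv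
    have h4 : HasDerivAt (fun x : ℝ => (x - a) * Real.sqrt (r ^ 2 - (x - a) ^ 2))
        (1 * Real.sqrt v + (x - a) * (1 / (2 * Real.sqrt v) * (-(2 * (x - a))))) x := by
      have hid : HasDerivAt (fun x : ℝ => x - a) 1 x := (hasDerivAt_id x).sub_const a
      exact hid.mul h3
    have h5 := (h1.const_mul (r ^ 2)).add h4
    have hsroot : Real.sqrt (1 - ((x - a) / r) ^ 2) = Real.sqrt v / r := by
      rw [show 1 - ((x - a) / r) ^ 2 = v / r ^ 2 by field_simp; exact hvdef.symm,
        Real.sqrt_div (by positivity : (0:ℝ) ≤ v), Real.sqrt_sq hr.le]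
    rw [hsroot] at h5
    convert h5 using 1
    · rfl
    · rfl
    · rfl
    clear_value v
    have key : 2 * Real.sqrt v = r ^ 2 * (1 / (Real.sqrt v / r) * (1 / r))
        + (1 * Real.sqrt v + (x - a) * (1 / (2 * Real.sqrt v) * -(2 * (x - a)))) := by
      field_simp
      linear_combination hsq + hvdef
    exact key
  have hint : IntervalIntegrable (fun x => 2 * Real.sqrt (r ^ 2 - (x - a) ^ 2))
      volume (a - r) c := by
    apply Continuous.intervalIntegrable
    exact continuous_const.mul
      ((continuous_const.sub ((continuous_id.sub continuous_const).pow 2)).sqrt)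
  rw [intervalIntegral.integral_eq_sub_of_hasDeriv_right_of_le hc hcontH
    (fun x hx => (hderiv x hx).hasDerivWithinAt) hint]
  have e1 : H (a - r) = -(r ^ 2 * (Real.pi / 2)) := by
    simp only [hH]
    rw [show a - r - a = -r by ring, show -r / r = -1 by field_simp,
      Real.arcsin_neg_one, show r ^ 2 - (-r) ^ 2 = 0 by ring, Real.sqrt_zero]
    ring
  rw [e1, hH]
  ring
set_option maxHeartbeats 1000000

theorem area_ball_inter_square
    (g : ℝ → ℝ) (hg : ∀ x, g x = Real.arccos x - x * Real.sqrt (1 - x ^ 2))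
    (n r x₁ : ℝ) (hr : 0 < r) (hn : 2 * r < n)
    (hx₁ : x₁ ∈ Set.Icc (0:ℝ) 1)
    (ξ : EuclideanSpace ℝ (Fin 2))
    (hξ0 : ξ 0 = n - x₁ * r)
    (hξ0' : r < ξ 0)
    (hξ1 : r < ξ 1) (hξ1' : ξ 1 < n - r) :
    (volume (Metric.closedBall ξ r ∩ {y : EuclideanSpace ℝ (Fin 2) |
        ∀ i, y i ∈ Set.Icc (0:ℝ) n})).toReal = r ^ 2 * (Real.pi - g x₁) := by
  obtain ⟨hx0, hx1le⟩ := hx₁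
  have hr' : (0:ℝ) ≤ r := hr.le
  set a : ℝ := ξ 0 with ha
  set b : ℝ := ξ 1 with hb
  have hna : n - a = x₁ * r := by rw [hξ0]; ring
  have han : a ≤ n := by nlinarith
  have harn : n ≤ a + r := by nlinarith
  have harl : a - r ≤ n := by nlinarith
  set S' : Set (ℝ × ℝ) := {p | (p.1 - a) ^ 2 + (p.2 - b) ^ 2 ≤ r ^ 2 ∧ p.1 ≤ n} with hS'
  have hS'm : MeasurableSet S' := by
    rw [hS']
    have he : {p : ℝ × ℝ | (p.1 - a) ^ 2 + (p.2 - b) ^ 2 ≤ r ^ 2 ∧ p.1 ≤ n}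
        = {p : ℝ × ℝ | (p.1 - a) ^ 2 + (p.2 - b) ^ 2 ≤ r ^ 2} ∩ {p : ℝ × ℝ | p.1 ≤ n} := rfl
    rw [he]
    exact (measurableSet_le (by fun_prop) measurable_const).inter
      (measurableSet_le (by fun_prop) measurable_const)
  have hF := (volume_preserving_finTwoArrow ℝ).comp
    (EuclideanSpace.volume_preserving_symm_measurableEquiv_toLp (Fin 2))
  have hset : (MeasurableEquiv.finTwoArrow ∘ (MeasurableEquiv.toLp 2 (Fin 2 → ℝ)).symm) ⁻¹' S'
      = Metric.closedBall ξ r ∩ {y : EuclideanSpace ℝ (Fin 2) | ∀ i, y i ∈ Set.Icc (0:ℝ) n} := by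
    ext y
    have hdist : dist y ξ = Real.sqrt ((y 0 - a) ^ 2 + (y 1 - b) ^ 2) := by
      rw [EuclideanSpace.dist_eq]
      simp [Fin.sum_univ_two, Real.dist_eq, sq_abs, ha, hb]
    have hdi : dist y ξ ≤ r ↔ (y 0 - a) ^ 2 + (y 1 - b) ^ 2 ≤ r ^ 2 := by
      rw [hdist]
      constructor
      · intro h
        nlinarith [Real.sq_sqrt (show (0:ℝ) ≤ (y 0 - a) ^ 2 + (y 1 - b) ^ 2 by positivity),
          Real.sqrt_nonneg ((y 0 - a) ^ 2 + (y 1 - b) ^ 2)]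
      · intro h
        calc Real.sqrt ((y 0 - a) ^ 2 + (y 1 - b) ^ 2) ≤ Real.sqrt (r ^ 2) :=
              Real.sqrt_le_sqrt h
          _ = r := Real.sqrt_sq hr'
    simp only [mem_preimage, Function.comp_apply, Set.mem_inter_iff, Metric.mem_closedBall,
      Set.mem_setOf_eq, Fin.forall_fin_two, Set.mem_Icc, hdi]
    show (y 0 - a) ^ 2 + (y 1 - b) ^ 2 ≤ r ^ 2 ∧ y 0 ≤ n ↔ _
    constructor
    · rintro ⟨h1, h2⟩
      refine ⟨h1, ⟨by nlinarith [sq_nonneg (y 1 - b)], h2⟩,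
        by nlinarith [sq_nonneg (y 0 - a)], by nlinarith [sq_nonneg (y 0 - a)]⟩
    · rintro ⟨h1, ⟨_, h2⟩, _⟩
      exact ⟨h1, h2⟩
  have hvol : volume (Metric.closedBall ξ r ∩ {y : EuclideanSpace ℝ (Fin 2) |
      ∀ i, y i ∈ Set.Icc (0:ℝ) n}) = volume S' := by
    rw [← hset]
    exact hF.measure_preimage hS'm.nullMeasurableSet
  have hslice : ∀ x : ℝ, Prod.mk x ⁻¹' S' =
      (if x ∈ Icc (a - r) n then
        Icc (b - Real.sqrt (r ^ 2 - (x - a) ^ 2)) (b + Real.sqrt (r ^ 2 - (x - a) ^ 2))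
       else (∅ : Set ℝ)) := by
    intro x
    ext y
    simp only [mem_preimage, hS', Set.mem_setOf_eq]
    split_ifs with hx
    · obtain ⟨hx1, hx2⟩ := hx
      have hv0 : 0 ≤ r ^ 2 - (x - a) ^ 2 := by nlinarith
      have hs := Real.sq_sqrt hv0
      have hsnn := Real.sqrt_nonneg (r ^ 2 - (x - a) ^ 2)
      rw [Set.mem_Icc]
      constructor
      · rintro ⟨h1, _⟩
        constructor <;>
          nlinarith [sq_nonneg (y - b + Real.sqrt (r ^ 2 - (x - a) ^ 2)),
            sq_nonneg (y - b - Real.sqrt (r ^ 2 - (x - a) ^ 2))]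
      · rintro ⟨h1, h2⟩
        exact ⟨by nlinarith, hx2⟩
    · rw [Set.mem_Icc, not_and_or, not_le, not_le] at hx
      simp only [Set.mem_empty_iff_false, iff_false, not_and, not_le]
      intro h1
      rcases hx with hx | hx
      · nlinarith
      · exact hx
  have hind : (fun x : ℝ => volume (Prod.mk x ⁻¹' S')) =
      (Icc (a - r) n).indicator
        (fun x => ENNReal.ofReal (2 * Real.sqrt (r ^ 2 - (x - a) ^ 2))) := by
    funext x
    rw [hslice x]
    split_ifs with hx
    · rw [Set.indicator_of_mem hx, Real.volume_Icc]
      congr 1; ring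
    · rw [Set.indicator_of_notMem hx, measure_empty]
  have hcont : Continuous (fun x : ℝ => 2 * Real.sqrt (r ^ 2 - (x - a) ^ 2)) :=
    continuous_const.mul
      ((continuous_const.sub ((continuous_id.sub continuous_const).pow 2)).sqrt)
  have hvolS' : volume S' = ENNReal.ofReal
      (∫ x in Icc (a - r) n, 2 * Real.sqrt (r ^ 2 - (x - a) ^ 2)) := by
    rw [Measure.volume_eq_prod, Measure.prod_apply hS'm]
    rw [show (fun x : ℝ => (volume : Measure ℝ) (Prod.mk x ⁻¹' S')) =
      (Icc (a - r) n).indicator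
        (fun x => ENNReal.ofReal (2 * Real.sqrt (r ^ 2 - (x - a) ^ 2))) from hind]
    rw [lintegral_indicator measurableSet_Icc]
    rw [← ofReal_integral_eq_lintegral_ofReal (hcont.integrableOn_Icc)
      (Filter.Eventually.of_forall fun x => by positivity)]
  have hIcc : ∫ x in Icc (a - r) n, 2 * Real.sqrt (r ^ 2 - (x - a) ^ 2)
      = ∫ x in (a - r)..n, 2 * Real.sqrt (r ^ 2 - (x - a) ^ 2) := by
    rw [MeasureTheory.integral_Icc_eq_integral_Ioc, intervalIntegral.integral_of_le harl]
  have hval : ∫ x in (a - r)..n, 2 * Real.sqrt (r ^ 2 - (x - a) ^ 2)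
      = r ^ 2 * (Real.pi - g x₁) := by
    rw [aux_integral a r n hr harl harn]
    have h1 : (n - a) / r = x₁ := by rw [hna]; field_simp
    have h2 : Real.sqrt (r ^ 2 - (n - a) ^ 2) = r * Real.sqrt (1 - x₁ ^ 2) := by
      rw [hna, show r ^ 2 - (x₁ * r) ^ 2 = r ^ 2 * (1 - x₁ ^ 2) by ring,
        Real.sqrt_mul (sq_nonneg r), Real.sqrt_sq hr']
    rw [h1, h2, hna, hg, Real.arccos]
    ring
  have hnn : 0 ≤ r ^ 2 * (Real.pi - g x₁) := by
    rw [hg]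
    have h3 := Real.arccos_le_pi x₁
    have h4 := Real.sqrt_nonneg (1 - x₁ ^ 2)
    nlinarith [mul_nonneg hx0 h4, sq_nonneg r]
  rw [hvol, hvolS', hIcc, hval, ENNReal.toReal_ofReal hnn]
end
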